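/- arXiv:1709.09956 — 2 statements merged into one kernel-verified Lean document; each statement's English description precedes it below -/
import Mathlib

section
/- Let ω be an almost everywhere strictly positive weight. Suppose there exist q > 1, δ ∈ (1/q, 1) and C > 0 such that A₂(E)/|S|² ≤ C (ω_{[2q]}(E)/ω_{[2q]}(S))^δ for every Carleson square S ⊂ 𝔻 and every measurable E ⊂ S, where A₂(E) = ∫_E (1-|z|²)² dA(z) and ω_{[2q]}(E) = ∫_E ω(z)(1-|z|²)^{2q} dA(z). Then ω ∈ B_q. -/
open MeasureTheory Complex Set Filter Topology
open scoped ENNReal NNReal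

noncomputable section

/-- The normalized Lebesgue area measure `dA = dx dy / π` on `ℂ` (the unit disc has mass 1). -/
def dA : Measure ℂ := (ENNReal.ofReal Real.pi)⁻¹ • volume

/-- The open unit disc `𝔻 = {z : |z| < 1}`. -/
def uD : Set ℂ := Metric.ball (0 : ℂ) 1

/-- The Carleson square `S(a)`, for `a ∈ 𝔻 \ {0}`:
`S(a) = {w ∈ 𝔻 : |a| < |w| < 1, |arg (a e^{-i arg w})| < (1-|a|)/2}`. -/
def cSq (a : ℂ) : Set ℂ :=
  {w : ℂ | ‖a‖ < ‖w‖ ∧ ‖w‖ < 1 ∧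
    |Complex.arg (a * (starRingEnd ℂ) w)| < (1 - ‖a‖) / 2}

/-- Euclidean area of a set in `ℂ`. -/
def eArea (E : Set ℂ) : ℝ := (volume E).toReal

/-- `∫_E ω dA`. -/
def wInt (ω : ℂ → ℝ) (E : Set ℂ) : ℝ := ∫ z in E, ω z ∂dA

/-- A weight: a nonnegative function integrable over the unit disc w.r.t. `dA`. -/
def IsWeight (ω : ℂ → ℝ) : Prop := (∀ z, 0 ≤ ω z) ∧ IntegrableOn ω uD dA

/-- Almost everywhere strictly positive on `𝔻`. -/
def AEPos (ω : ℂ → ℝ) : Prop := ∀ᵐ z ∂(dA.restrict uD), 0 < ω z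

/-- The quantity whose supremum over Carleson squares defines the `B_q` constant. -/
def BqAt (q : ℝ) (ω : ℂ → ℝ) (a : ℂ) : ℝ :=
  ((∫ z in cSq a, ω z * (1 - ‖z‖ ^ 2) ^ (2 * q) ∂dA) / eArea (cSq a) ^ 2) *
    ((∫ z in cSq a, ω z ^ (-(1 / (q - 1))) ∂dA) / eArea (cSq a) ^ 2) ^ (q - 1)

/-- The Bekollé–Bonami type class `B_q` (`1 < q < ∞`), for a.e. strictly positive weights. -/
def MemBq (q : ℝ) (ω : ℂ → ℝ) : Prop :=
  1 < q ∧ AEPos ω ∧ ∃ C : ℝ, ∀ a : ℂ, a ≠ 0 → ‖a‖ < 1 → BqAt q ω a ≤ C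

/-- The constant `B_q(ω)`, i.e. the supremum over all Carleson squares. -/
def BqNorm (q : ℝ) (ω : ℂ → ℝ) : ℝ :=
  sSup (BqAt q ω '' {a : ℂ | a ≠ 0 ∧ ‖a‖ < 1})

/-- `B_∞ = ⋃_{q>1} B_q`. -/
def MemBinf (ω : ℂ → ℝ) : Prop := ∃ q : ℝ, MemBq q ω

/-- `‖f‖_{A^p_ω}^p = ∫_𝔻 |f|^p ω dA` (also used as the `L^p_ω` "norm" to the `p`). -/
def ApPow (p : ℝ) (ω : ℂ → ℝ) (f : ℂ → ℂ) : ℝ :=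
  ∫ z in uD, ‖f z‖ ^ p * ω z ∂dA

/-- Membership in the weighted Bergman space `A^p_ω`. -/
def MemAp (p : ℝ) (ω : ℂ → ℝ) (f : ℂ → ℂ) : Prop :=
  DifferentiableOn ℂ f uD ∧
    IntegrableOn (fun z => ‖f z‖ ^ p * ω z) uD dA

/-- `Z : ι → ℂ` is the zero sequence (with multiplicities) of `f` on `𝔻`:
every point of `𝔻` is hit by `Z` exactly `ord_f` many times. -/
def IsZeroSeqOf {ι : Type} (f : ℂ → ℂ) (Z : ι → ℂ) : Prop :=
  (∀ i, Z i ∈ uD) ∧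
    ∀ z ∈ uD, {i | Z i = z}.Finite ∧
      ∀ h : AnalyticAt ℂ f z, analyticOrderAt f z = (Nat.card {i | Z i = z} : ℕ∞)

/-- `Z : ι → ℂ` is a subsequence of the zero sequence of `f` (multiplicities counted). -/
def IsZeroSubseqOf {ι : Type} (f : ℂ → ℂ) (Z : ι → ℂ) : Prop :=
  (∀ i, Z i ∈ uD ∧ f (Z i) = 0) ∧
    ∀ z ∈ uD, {i | Z i = z}.Finite ∧
      ∀ h : AnalyticAt ℂ f z, (Nat.card {i | Z i = z} : ℕ∞) ≤ analyticOrderAt f z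

/-- `Z` is a zero set for `A^p_ω`: the zero sequence of some nonzero `f ∈ A^p_ω`. -/
def IsZeroSetFor (p : ℝ) (ω : ℂ → ℝ) {ι : Type} (Z : ι → ℂ) : Prop :=
  ∃ f : ℂ → ℂ, MemAp p ω f ∧ (∃ z ∈ uD, f z ≠ 0) ∧ IsZeroSeqOf f Z

/-- `k_Z(z) = (|z|²/2) ∑_{a ∈ Z} (1-|a|²)²/|1-conj(a) z|²`. -/
def kZ {ι : Type} (Z : ι → ℂ) (z : ℂ) : ℝ :=
  ‖z‖ ^ 2 / 2 *
    ∑' i, (1 - ‖Z i‖ ^ 2) ^ 2 / ‖1 - (starRingEnd ℂ) (Z i) * z‖ ^ 2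

/-- `W_Z = e^{k_Z}`. -/
def WZ {ι : Type} (Z : ι → ℂ) (z : ℂ) : ℝ := Real.exp (kZ Z z)

/-- One factor of the infinite product appearing in Luecking's function `h`. -/
def zfac (a z : ℂ) : ℝ :=
  ‖(a - z) / (1 - (starRingEnd ℂ) a * z)‖ *
    Real.exp ((1 - ‖(a - z) / (1 - (starRingEnd ℂ) a * z)‖ ^ 2) / 2)

/-- Luecking's auxiliary function `h`. -/
def hFun {ι : Type} (f : ℂ → ℂ) (Z : ι → ℂ) (z : ℂ) : ℝ :=
  ‖f z‖ / ∏' i, zfac (Z i) z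

/-- Pseudohyperbolic distance `ρ(z,w) = |(z-w)/(1-conj(z)w)|`. -/
def pDist (z w : ℂ) : ℝ := ‖(z - w) / (1 - (starRingEnd ℂ) z * w)‖

/-- Pseudohyperbolic disc `Δ(z,r)`. -/
def pDisc (z : ℂ) (r : ℝ) : Set ℂ := {w : ℂ | ‖w‖ < 1 ∧ pDist z w < r}

/-- A harmonic function on the (simply connected) unit disc,
characterized as the real part of an analytic function. -/
def HarmonicOnDisc (h : ℂ → ℝ) : Prop :=
  ∃ g : ℂ → ℂ, DifferentiableOn ℂ g uD ∧ ∀ z ∈ uD, h z = (g z).re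

/-- `ω̂(r) = ∫_r^1 ω(s) ds` for a radial weight given by its profile `ω : ℝ → ℝ`. -/
def omHat (ω : ℝ → ℝ) (r : ℝ) : ℝ := ∫ s in r..1, ω s

/-- A radial weight (its profile on `[0,1)`) in the class `D̂`. -/
def IsRadialDhat (ω : ℝ → ℝ) : Prop :=
  (∀ s, 0 ≤ ω s) ∧ IntegrableOn ω (Set.Icc 0 1) ∧
    (∀ r, 0 ≤ r → r < 1 → 0 < omHat ω r) ∧
    ∃ C : ℝ, 1 ≤ C ∧ ∀ r, 0 ≤ r → r < 1 → omHat ω r ≤ C * omHat ω ((1 + r) / 2)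

/-- The radial weight on `𝔻` induced by a profile `ω : ℝ → ℝ`. -/
def rad (ω : ℝ → ℝ) : ℂ → ℝ := fun z => ω (‖z‖)

/-- `ω_x = ∫_0^1 s^x ω(s) ds`. -/
def omMom (ω : ℝ → ℝ) (x : ℝ) : ℝ := ∫ s in (0:ℝ)..1, s ^ x * ω s

/-- The reproducing kernel `B^ω_z(ζ) = ∑_{n ≥ 0} (conj(z) ζ)^n / (2 ω_{2n+1})` of `A²_ω`. -/
def BKer (ω : ℝ → ℝ) (z ζ : ℂ) : ℂ :=
  ∑' n : ℕ, ((starRingEnd ℂ) z * ζ) ^ n / ((2 * omMom ω (2 * n + 1) : ℝ) : ℂ)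

/-- `K^ω_z(ζ) = |B^ω_z(ζ)|² / ‖B^ω_z‖²_{A²_ω}`. -/
def KKer (ω : ℝ → ℝ) (z ζ : ℂ) : ℝ :=
  ‖BKer ω z ζ‖ ^ 2 /
    ∫ u in uD, ‖BKer ω z u‖ ^ 2 * ω (‖u‖) ∂dA

/-- `∫⁻_𝔻 |f|^p dμ` (as an extended real). -/
def muInt (p : ℝ) (μ : Measure ℂ) (f : ℂ → ℂ) : ℝ≥0∞ :=
  ∫⁻ z in uD, ENNReal.ofReal (‖f z‖ ^ p) ∂μ

/-- `μ` is a `p`-Carleson measure for `A^p_ω`. -/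
def IsCarleson (p : ℝ) (ω : ℂ → ℝ) (μ : Measure ℂ) : Prop :=
  ∃ C : ℝ, 0 < C ∧ ∀ f : ℂ → ℂ, MemAp p ω f →
    muInt p μ f ≤ ENNReal.ofReal (C * ApPow p ω f)

/-- `μ` is a sampling measure for `A^p_ω`. -/
def IsSampling (p : ℝ) (ω : ℂ → ℝ) (μ : Measure ℂ) : Prop :=
  ∃ C : ℝ, 0 < C ∧ ∀ f : ℂ → ℂ, MemAp p ω f →
    ENNReal.ofReal (C⁻¹ * ApPow p ω f) ≤ muInt p μ f ∧
      muInt p μ f ≤ ENNReal.ofReal (C * ApPow p ω f)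

/-- `G` is a dominating set for `A^p_ω`. -/
def IsDominating (p : ℝ) (ω : ℂ → ℝ) (G : Set ℂ) : Prop :=
  ∃ δ : ℝ, 0 < δ ∧ ∀ f : ℂ → ℂ, MemAp p ω f →
    δ * ApPow p ω f ≤ ∫ z in G, ‖f z‖ ^ p * ω z ∂dA

/-- `‖M_ω(μ)‖_{L^∞} = sup_S μ(S)/ω(S)` over Carleson squares. -/
def MmaxNorm (ω : ℂ → ℝ) (μ : Measure ℂ) : ℝ :=
  sSup ((fun a => (μ (cSq a)).toReal / wInt ω (cSq a)) ''
    {a : ℂ | a ≠ 0 ∧ ‖a‖ < 1})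

/-- The class `C_q`. -/
def MemCq (q : ℝ) (ω : ℂ → ℝ) : Prop :=
  1 < q ∧ AEPos ω ∧ ∃ r : ℝ, 0 < r ∧ r < 1 ∧ ∃ C : ℝ, 0 < C ∧
    ∀ z : ℂ, ‖z‖ < 1 →
      wInt ω (pDisc z r) ^ (1 / q) *
        (∫ u in pDisc z r, ω u ^ (-(1 / (q - 1))) ∂dA) ^ ((q - 1) / q) ≤
          C * eArea (pDisc z r)

/-- `C_∞ = ⋃_{q>1} C_q`. -/
def MemCinf (ω : ℂ → ℝ) : Prop := ∃ q : ℝ, MemCq q ω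

/-- The class `D̂(𝔻)` of (possibly non-radial) weights doubling on Carleson squares. -/
def DhatD (ω : ℂ → ℝ) : Prop :=
  ∃ C : ℝ, 0 < C ∧ ∀ a : ℂ, a ≠ 0 → ‖a‖ < 1 →
    wInt ω (cSq a) ≤
      C * wInt ω (cSq ((((1 + ‖a‖) / 2 : ℝ) : ℂ) * (a / (‖a‖ : ℂ))))

/-- Weak convergence of a sequence of measures against nonnegative continuous
functions compactly supported in `𝔻`. -/
def WeakConvD (μn : ℕ → Measure ℂ) (μ : Measure ℂ) : Prop :=
  ∀ h : ℂ → ℝ, Continuous h → HasCompactSupport h → tsupport h ⊆ uD → (∀ z, 0 ≤ h z) →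
    Tendsto (fun n => ∫ z, h z ∂(μn n)) atTop (nhds (∫ z, h z ∂μ))

/-- The norm of the embedding `Id : A^p_ω → L^p_μ`. -/
def embNorm (p : ℝ) (ω : ℂ → ℝ) (μ : Measure ℂ) : ℝ :=
  sInf {c : ℝ | 0 ≤ c ∧ ∀ f : ℂ → ℂ, MemAp p ω f →
    muInt p μ f ≤ ENNReal.ofReal (c ^ p * ApPow p ω f)}


private lemma aux_solve {C s ν t δ m G : ℝ} (hC : 0 < C) (hs : 0 < s) (hν : 0 < ν)
    (ht : 0 < t) (hδ : 0 < δ) (hδ1 : δ < 1) (hm : 0 ≤ m) (hG : 0 ≤ G)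
    (hGm : G ≤ m * t⁻¹) (hmain : m / s ≤ C * (G / ν) ^ δ) :
    m ≤ (C * s) ^ (1/(1-δ)) * (t * ν) ^ (-(δ/(1-δ))) := by
  have h1δ : 0 < 1 - δ := by linarith
  rcases eq_or_lt_of_le hm with h0 | h0
  · rw [← h0]
    positivity
  · -- m > 0
    have step1 : m ≤ C * s * (m / (t * ν)) ^ δ := by
      have e1 : G / ν ≤ m / (t * ν) := by
        rw [div_le_div_iff₀ hν (by positivity)]
        calc G * (t * ν) ≤ (m * t⁻¹) * (t * ν) :=
              mul_le_mul_of_nonneg_right hGm (by positivity)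
          _ = m * ν := by field_simp
      have e2 : (G / ν) ^ δ ≤ (m / (t*ν)) ^ δ :=
        Real.rpow_le_rpow (by positivity) e1 hδ.le
      calc m = (m / s) * s := by field_simp
        _ ≤ (C * (G / ν) ^ δ) * s := by nlinarith
        _ ≤ (C * (m / (t*ν)) ^ δ) * s := mul_le_mul_of_nonneg_right (mul_le_mul_of_nonneg_left e2 hC.le) hs.le
        _ = C * s * (m / (t*ν)) ^ δ := by ring
    have step2 : m ^ (1 - δ) ≤ C * s * (t * ν) ^ (-δ) := by
      have e3 : (m / (t*ν)) ^ δ = m ^ δ * (t*ν) ^ (-δ) := by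
        rw [Real.div_rpow hm (by positivity), Real.rpow_neg (by positivity), div_eq_mul_inv]
      have e4 : m ^ (1-δ) = m * m ^ (-δ) := by
        rw [show (1:ℝ)-δ = 1 + (-δ) by ring, Real.rpow_add h0, Real.rpow_one]
      have e5 : m ^ δ * m ^ (-δ) = 1 := by
        rw [← Real.rpow_add h0]; simp
      have := mul_le_mul_of_nonneg_right step1 (Real.rpow_nonneg h0.le (-δ))
      calc m ^ (1-δ) = m * m ^ (-δ) := e4
        _ ≤ C * s * (m / (t*ν)) ^ δ * m ^ (-δ) := this
        _ = C * s * (t*ν) ^ (-δ) * (m ^ δ * m ^ (-δ)) := by rw [e3]; ring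
        _ = C * s * (t*ν) ^ (-δ) := by rw [e5, mul_one]
    calc m = (m ^ (1-δ)) ^ (1/(1-δ)) := by
          rw [← Real.rpow_mul h0.le]
          rw [show (1-δ) * (1/(1-δ)) = 1 by field_simp, Real.rpow_one]
      _ ≤ (C * s * (t*ν) ^ (-δ)) ^ (1/(1-δ)) :=
          Real.rpow_le_rpow (Real.rpow_nonneg h0.le _) step2 (by positivity)
      _ = (C * s) ^ (1/(1-δ)) * (t * ν) ^ (-(δ/(1-δ))) := by
          rw [Real.mul_rpow (by positivity) (Real.rpow_nonneg (by positivity) _),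
            ← Real.rpow_mul (by positivity : (0:ℝ) ≤ t*ν)]
          congr 1
          field_simp

private lemma aux_t0 {A B K μS c2 : ℝ} (hB : 0 < B) (hK : 0 < K) (hμ : 0 < μS) :
    ((K/μS)^(1/B))^A * μS + c2 * (((K/μS)^(1/B))^(A-B) * K)
      = (1 + c2) * (K^(A/B) * μS^(1-A/B)) := by
  have hKμ : 0 < K / μS := by positivity
  have key : ∀ y : ℝ, ((K/μS)^(1/B))^y = K ^ (y/B) * μS ^ (-(y/B)) := by
    intro y
    rw [← Real.rpow_mul hKμ.le, show 1/B*y = y/B by ring,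
      Real.div_rpow hK.le hμ.le, Real.rpow_neg hμ.le, div_eq_mul_inv]
  rw [key A, key (A-B)]
  have e1 : K ^ (A/B) * μS ^ (-(A/B)) * μS = K^(A/B) * μS^(1-A/B) := by
    rw [mul_assoc]
    congr 1
    rw [show (1:ℝ)-A/B = -(A/B)+1 by ring, Real.rpow_add hμ, Real.rpow_one]
  have e2 : K ^ ((A-B)/B) * μS ^ (-((A-B)/B)) * K = K^(A/B) * μS^(1-A/B) := by
    have h1 : -((A-B)/B) = 1 - A/B := by field_simp; ring
    have h2 : A/B = (A-B)/B + 1 := by field_simp; ring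
    rw [h1, h2, Real.rpow_add hK, Real.rpow_one]; ring
  rw [e1, e2]; ring

private lemma aux_assemble {q δ C cs ν s I μS : ℝ}
    (hq : 1 < q) (hδ0 : 0 < δ) (hδq : 1 < δ * q) (hδ2 : δ < 1)
    (hC : 0 < C) (hν : 0 < ν) (hs : 0 < s) (hμS0 : 0 ≤ μS) (hcs : 0 < cs)
    (hI0 : 0 ≤ I) (hμSC : μS ≤ C * s)
    (hI : I ≤ cs * ((((C*s) ^ (1/(1-δ)) * ν ^ (-(δ/(1-δ)))) ^ ((1/(q-1))/(δ/(1-δ)))) *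
      μS ^ (1 - (1/(q-1))/(δ/(1-δ))))) :
    (ν / s) * (I / s) ^ (q-1) ≤ cs ^ (q-1) * C ^ q := by
  have hq1 : 0 < q - 1 := by linarith
  have h1δ : 0 < 1 - δ := by linarith
  set A := 1/(q-1) with hA
  set B := δ/(1-δ) with hB
  have hA0 : 0 < A := by positivity
  have hB0 : 0 < B := by positivity
  have hAB : A < B := by
    rw [hA, hB, div_lt_div_iff₀ hq1 h1δ]; nlinarith
  have hABlt : A/B < 1 := (div_lt_one hB0).mpr hAB
  have hCs : 0 < C * s := by positivity
  have eK : ((C*s) ^ (1/(1-δ)) * ν ^ (-B)) ^ (A/B) = (C*s)^(A/δ) * ν^(-A) := by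
    rw [Real.mul_rpow (Real.rpow_nonneg hCs.le _) (Real.rpow_nonneg hν.le _),
      ← Real.rpow_mul hCs.le, ← Real.rpow_mul hν.le]
    congr 2
    · rw [hB]; field_simp; try ring
    · rw [hB]; field_simp; try ring
  have hμpow : μS ^ (1 - A/B) ≤ (C*s) ^ (1 - A/B) :=
    Real.rpow_le_rpow hμS0 hμSC (by linarith)
  have e2 : (C*s)^(A/δ) * (C*s)^(1-A/B) = (C*s)^(1+A) := by
    rw [← Real.rpow_add hCs]
    congr 1
    rw [hA, hB]; field_simp; try ring
  have hI2 : I ≤ cs * ((C*s)^(1+A) * ν^(-A)) := by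
    calc I ≤ cs * (((C*s)^(1/(1-δ)) * ν^(-B)) ^ (A/B) * μS ^ (1-A/B)) := hI
      _ = cs * ((C*s)^(A/δ) * ν^(-A) * μS ^ (1-A/B)) := by rw [eK]
      _ ≤ cs * ((C*s)^(A/δ) * ν^(-A) * (C*s)^(1-A/B)) := by
          have hh : (0:ℝ) ≤ (C*s)^(A/δ) * ν^(-A) := by positivity
          nlinarith [mul_le_mul_of_nonneg_left hμpow hh]
      _ = cs * ((C*s)^(1+A) * ν^(-A)) := by rw [← e2]; ring
  have h1 : I/s ≤ cs * ((C*s)^(1+A) * ν^(-A)) / s := by gcongr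
  have hT : (I/s) ^ (q-1) ≤ (cs * ((C*s)^(1+A) * ν^(-A)) / s) ^ (q-1) :=
    Real.rpow_le_rpow (by positivity) h1 (by linarith)
  have hsq : s ^ (q-1) * s = s ^ q := by
    nth_rewrite 2 [← Real.rpow_one s]
    rw [← Real.rpow_add hs]; ring_nf
  have hspos : 0 < s ^ (q-1) := Real.rpow_pos_of_pos hs _
  have E : (ν/s) * ((cs * ((C*s)^(1+A) * ν^(-A)) / s) ^ (q-1)) = cs^(q-1) * C^q := by
    rw [Real.div_rpow (by positivity) hs.le,
        Real.mul_rpow hcs.le (by positivity),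
        Real.mul_rpow (Real.rpow_nonneg hCs.le _) (Real.rpow_nonneg hν.le _),
        ← Real.rpow_mul hCs.le, ← Real.rpow_mul hν.le,
        show (1+A)*(q-1) = q by rw [hA]; field_simp; try ring,
        show (-A)*(q-1) = -1 by rw [hA]; field_simp; try ring,
        Real.rpow_neg_one, Real.mul_rpow hC.le hs.le, ← hsq]
    have hCq : 0 < C ^ q := Real.rpow_pos_of_pos hC _
    field_simp
  calc (ν/s) * (I/s)^(q-1) ≤ (ν/s) * ((cs * ((C*s)^(1+A) * ν^(-A)) / s) ^ (q-1)) :=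
        mul_le_mul_of_nonneg_left hT (by positivity)
    _ = cs^(q-1) * C^q := E

private lemma aux_dyadic {t₀ x : ℝ} (ht : 0 < t₀) (hx : t₀ < x) :
    ∃ n : ℕ, 2 ^ n * t₀ < x ∧ x ≤ 2 ^ (n + 1) * t₀ := by
  have hex : ∃ n : ℕ, x ≤ 2 ^ (n + 1) * t₀ := by
    obtain ⟨m, hm⟩ := pow_unbounded_of_one_lt (R := ℝ) (x / t₀) one_lt_two
    rw [div_lt_iff₀ ht] at hm
    refine ⟨m, ?_⟩
    have h1 : (2:ℝ) ^ m * t₀ ≤ 2 ^ (m+1) * t₀ := by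
      have h2 : (2:ℝ) ^ m ≤ 2 ^ (m+1) := by
        apply pow_le_pow_right₀ (by norm_num); omega
      nlinarith
    linarith
  classical
  refine ⟨Nat.find hex, ?_, Nat.find_spec hex⟩
  rcases Nat.eq_zero_or_pos (Nat.find hex) with h0 | hpos
  · rw [h0]; simpa using hx
  · have hmin := Nat.find_min hex (m := Nat.find hex - 1) (by omega)
    push_neg at hmin
    have heq : Nat.find hex - 1 + 1 = Nat.find hex := by omega
    rwa [heq] at hmin

private lemma aux_layer {X : Type*} [MeasurableSpace X] (μ : Measure X) {S : Set X}
    (hSmeas : MeasurableSet S) (F u : X → ℝ) (hFmeas : Measurable F)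
    (hFnn : ∀ z ∈ S, 0 ≤ F z) (hunn : ∀ z, 0 ≤ u z)
    (hu_int : IntegrableOn u S μ)
    {t₀ K A B : ℝ} (ht₀ : 0 < t₀) (hK : 0 ≤ K) (hA : 0 < A) (hAB : A < B)
    (hweak : ∀ t, 0 < t → ∫ z in S ∩ {z | t < F z}, u z ∂μ ≤ K * t ^ (-B)) :
    ∫⁻ z in S, ENNReal.ofReal (F z ^ A * u z) ∂μ ≤
      ENNReal.ofReal (t₀ ^ A * (∫ z in S, u z ∂μ) +
        (2:ℝ)^A * (1 - (2:ℝ)^(A-B))⁻¹ * (t₀ ^ (A - B) * K)) := by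
  have hIu : 0 ≤ ∫ z in S, u z ∂μ := integral_nonneg hunn
  have hr0 : (0:ℝ) < (2:ℝ)^(A-B) := Real.rpow_pos_of_pos two_pos _
  have hr1 : (2:ℝ)^(A-B) < 1 :=
    Real.rpow_lt_one_of_one_lt_of_neg one_lt_two (by linarith)
  -- bound on the bounded part
  have hBsm : MeasurableSet (S ∩ {z | F z ≤ t₀}) :=
    hSmeas.inter (measurableSet_le hFmeas measurable_const)
  have hBs : ∫⁻ z in S ∩ {z | F z ≤ t₀}, ENNReal.ofReal (F z ^ A * u z) ∂μ ≤
      ENNReal.ofReal (t₀ ^ A) * ENNReal.ofReal (∫ z in S, u z ∂μ) := by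
    have hb : ∀ᵐ z ∂(μ.restrict (S ∩ {z | F z ≤ t₀})),
        ENNReal.ofReal (F z ^ A * u z) ≤ ENNReal.ofReal (t₀ ^ A) * ENNReal.ofReal (u z) := by
      refine (ae_restrict_iff' hBsm).mpr (ae_of_all _ fun z hz => ?_)
      rw [← ENNReal.ofReal_mul (Real.rpow_nonneg ht₀.le _)]
      exact ENNReal.ofReal_le_ofReal (mul_le_mul_of_nonneg_right
        (Real.rpow_le_rpow (hFnn z hz.1) hz.2 hA.le) (hunn z))
    calc ∫⁻ z in S ∩ {z | F z ≤ t₀}, ENNReal.ofReal (F z ^ A * u z) ∂μ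
        ≤ ∫⁻ z in S ∩ {z | F z ≤ t₀}, ENNReal.ofReal (t₀ ^ A) * ENNReal.ofReal (u z) ∂μ :=
          lintegral_mono_ae hb
      _ = ENNReal.ofReal (t₀ ^ A) * ∫⁻ z in S ∩ {z | F z ≤ t₀}, ENNReal.ofReal (u z) ∂μ :=
          lintegral_const_mul' _ _ ENNReal.ofReal_ne_top
      _ ≤ ENNReal.ofReal (t₀ ^ A) * ∫⁻ z in S, ENNReal.ofReal (u z) ∂μ := by
          gcongr
          exact inter_subset_left
      _ = ENNReal.ofReal (t₀ ^ A) * ENNReal.ofReal (∫ z in S, u z ∂μ) := by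
          rw [← ofReal_integral_eq_lintegral_ofReal hu_int (ae_of_all _ hunn)]
  -- per-piece bound
  have hterm : ∀ k : ℕ, ((2:ℝ)^(k+1)*t₀)^A * (K * ((2:ℝ)^k*t₀)^(-B)) =
      (2:ℝ)^A * (t₀^(A-B) * K) * ((2:ℝ)^(A-B))^k := by
    intro k
    have h2 : (0:ℝ) < 2 := two_pos
    have c1 : ((2:ℝ)^(k+1)*t₀)^A = (2:ℝ)^(((k:ℝ)+1)*A) * t₀^A := by
      rw [Real.mul_rpow (by positivity) ht₀.le, ← Real.rpow_natCast (2:ℝ) (k+1),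
        ← Real.rpow_mul h2.le]
      push_cast
      try ring_nf
    have c2 : ((2:ℝ)^k*t₀)^(-B) = (2:ℝ)^((k:ℝ)*(-B)) * t₀^(-B) := by
      rw [Real.mul_rpow (by positivity) ht₀.le, ← Real.rpow_natCast (2:ℝ) k,
        ← Real.rpow_mul h2.le]
    have c3 : ((2:ℝ)^(A-B))^k = (2:ℝ)^((A-B)*(k:ℝ)) := by
      rw [← Real.rpow_natCast ((2:ℝ)^(A-B)) k, ← Real.rpow_mul h2.le]
    have e1 : (2:ℝ)^(((k:ℝ)+1)*A) * (2:ℝ)^((k:ℝ)*(-B)) = (2:ℝ)^A * (2:ℝ)^((A-B)*(k:ℝ)) := by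
      rw [← Real.rpow_add h2, ← Real.rpow_add h2]; congr 1; try ring
    have e2 : t₀^A * t₀^(-B) = t₀^(A-B) := by
      rw [← Real.rpow_add ht₀]; congr 1; try ring
    rw [c1, c2, c3]
    rw [show (2:ℝ)^(((k:ℝ)+1)*A) * t₀^A * (K * ((2:ℝ)^((k:ℝ)*(-B)) * t₀^(-B)))
        = ((2:ℝ)^(((k:ℝ)+1)*A) * (2:ℝ)^((k:ℝ)*(-B))) * (t₀^A * t₀^(-B)) * K from by ring,
      e1, e2]
    ring
  have hAk : ∀ k : ℕ,
      ∫⁻ z in S ∩ {z | 2^k*t₀ < F z ∧ F z ≤ 2^(k+1)*t₀}, ENNReal.ofReal (F z ^ A * u z) ∂μ ≤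
      ENNReal.ofReal ((2:ℝ)^A * (t₀^(A-B) * K) * ((2:ℝ)^(A-B))^k) := by
    intro k
    have hkm : MeasurableSet (S ∩ {z | 2^k*t₀ < F z ∧ F z ≤ 2^(k+1)*t₀}) :=
      hSmeas.inter ((measurableSet_lt measurable_const hFmeas).inter
        (measurableSet_le hFmeas measurable_const))
    have h2k : (0:ℝ) < 2^k * t₀ := by positivity
    have h2k1 : (0:ℝ) ≤ ((2:ℝ)^(k+1)*t₀)^A := Real.rpow_nonneg (by positivity) _
    have hb : ∀ᵐ z ∂(μ.restrict (S ∩ {z | 2^k*t₀ < F z ∧ F z ≤ 2^(k+1)*t₀})),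
        ENNReal.ofReal (F z ^ A * u z) ≤
          ENNReal.ofReal (((2:ℝ)^(k+1)*t₀)^A) * ENNReal.ofReal (u z) := by
      refine (ae_restrict_iff' hkm).mpr (ae_of_all _ fun z hz => ?_)
      rw [← ENNReal.ofReal_mul h2k1]
      exact ENNReal.ofReal_le_ofReal (mul_le_mul_of_nonneg_right
        (Real.rpow_le_rpow (hFnn z hz.1) hz.2.2 hA.le) (hunn z))
    calc ∫⁻ z in S ∩ {z | 2^k*t₀ < F z ∧ F z ≤ 2^(k+1)*t₀}, ENNReal.ofReal (F z ^ A * u z) ∂μ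
        ≤ ∫⁻ z in S ∩ {z | 2^k*t₀ < F z ∧ F z ≤ 2^(k+1)*t₀},
            ENNReal.ofReal (((2:ℝ)^(k+1)*t₀)^A) * ENNReal.ofReal (u z) ∂μ :=
          lintegral_mono_ae hb
      _ = ENNReal.ofReal (((2:ℝ)^(k+1)*t₀)^A) *
            ∫⁻ z in S ∩ {z | 2^k*t₀ < F z ∧ F z ≤ 2^(k+1)*t₀}, ENNReal.ofReal (u z) ∂μ :=
          lintegral_const_mul' _ _ ENNReal.ofReal_ne_top
      _ ≤ ENNReal.ofReal (((2:ℝ)^(k+1)*t₀)^A) *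
            ∫⁻ z in S ∩ {z | 2^k*t₀ < F z}, ENNReal.ofReal (u z) ∂μ := by
          gcongr
          exact fun h => h.1
      _ = ENNReal.ofReal (((2:ℝ)^(k+1)*t₀)^A) *
            ENNReal.ofReal (∫ z in S ∩ {z | 2^k*t₀ < F z}, u z ∂μ) := by
          rw [← ofReal_integral_eq_lintegral_ofReal (hu_int.mono_set inter_subset_left)
            (ae_of_all _ hunn)]
      _ ≤ ENNReal.ofReal (((2:ℝ)^(k+1)*t₀)^A) * ENNReal.ofReal (K * (2^k*t₀)^(-B)) := by
          gcongr
          exact hweak _ h2k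
      _ = ENNReal.ofReal (((2:ℝ)^(k+1)*t₀)^A * (K * ((2:ℝ)^k*t₀)^(-B))) :=
          (ENNReal.ofReal_mul h2k1).symm
      _ = ENNReal.ofReal ((2:ℝ)^A * (t₀^(A-B) * K) * ((2:ℝ)^(A-B))^k) := by rw [hterm k]
  -- geometric sum
  have hnn : ∀ k : ℕ, (0:ℝ) ≤ (2:ℝ)^A * (t₀^(A-B) * K) * ((2:ℝ)^(A-B))^k := fun k =>
    mul_nonneg (mul_nonneg (Real.rpow_nonneg (by norm_num) A)
      (mul_nonneg (Real.rpow_nonneg ht₀.le _) hK)) (pow_nonneg hr0.le k)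
  have hsum : ∑' k : ℕ, ENNReal.ofReal ((2:ℝ)^A * (t₀^(A-B) * K) * ((2:ℝ)^(A-B))^k)
      = ENNReal.ofReal ((2:ℝ)^A * (1 - (2:ℝ)^(A-B))⁻¹ * (t₀^(A-B)*K)) := by
    rw [← ENNReal.ofReal_tsum_of_nonneg hnn
      (Summable.mul_left _ (summable_geometric_of_lt_one hr0.le hr1))]
    congr 1
    rw [tsum_mul_left, tsum_geometric_of_lt_one hr0.le hr1]
    ring
  -- covering
  have hcover : S ⊆ (S ∩ {z | F z ≤ t₀}) ∪
      ⋃ k : ℕ, (S ∩ {z | 2^k*t₀ < F z ∧ F z ≤ 2^(k+1)*t₀}) := by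
    intro z hz
    rcases le_or_gt (F z) t₀ with hle | hlt
    · exact Or.inl ⟨hz, hle⟩
    · obtain ⟨n, h1, h2⟩ := aux_dyadic ht₀ hlt
      exact Or.inr (Set.mem_iUnion.mpr ⟨n, hz, h1, h2⟩)
  have h1nn : (0:ℝ) ≤ t₀ ^ A * ∫ z in S, u z ∂μ :=
    mul_nonneg (Real.rpow_nonneg ht₀.le _) hIu
  have h2nn : (0:ℝ) ≤ (2:ℝ)^A * (1 - (2:ℝ)^(A-B))⁻¹ * (t₀^(A-B)*K) :=
    mul_nonneg (mul_nonneg (Real.rpow_nonneg (by norm_num) _)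
      (inv_nonneg.mpr (by linarith))) (mul_nonneg (Real.rpow_nonneg ht₀.le _) hK)
  calc ∫⁻ z in S, ENNReal.ofReal (F z ^ A * u z) ∂μ
      ≤ ∫⁻ z in (S ∩ {z | F z ≤ t₀}) ∪
          ⋃ k : ℕ, (S ∩ {z | 2^k*t₀ < F z ∧ F z ≤ 2^(k+1)*t₀}),
          ENNReal.ofReal (F z ^ A * u z) ∂μ := lintegral_mono_set hcover
    _ ≤ (∫⁻ z in S ∩ {z | F z ≤ t₀}, ENNReal.ofReal (F z ^ A * u z) ∂μ) +
          ∫⁻ z in ⋃ k : ℕ, (S ∩ {z | 2^k*t₀ < F z ∧ F z ≤ 2^(k+1)*t₀}),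
            ENNReal.ofReal (F z ^ A * u z) ∂μ := lintegral_union_le _ _ _
    _ ≤ ENNReal.ofReal (t₀ ^ A) * ENNReal.ofReal (∫ z in S, u z ∂μ) +
          ∑' k : ℕ, ENNReal.ofReal ((2:ℝ)^A * (t₀^(A-B) * K) * ((2:ℝ)^(A-B))^k) :=
        add_le_add hBs ((lintegral_iUnion_le _ _).trans (ENNReal.tsum_le_tsum hAk))
    _ = ENNReal.ofReal (t₀ ^ A * (∫ z in S, u z ∂μ) +
          (2:ℝ)^A * (1 - (2:ℝ)^(A-B))⁻¹ * (t₀ ^ (A - B) * K)) := by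
        rw [hsum, ← ENNReal.ofReal_mul (Real.rpow_nonneg ht₀.le _),
          ← ENNReal.ofReal_add h1nn h2nn]

private lemma aux_int_le {α : Type} [MeasurableSpace α] (μ : MeasureTheory.Measure α)
    (f : α → ℝ) (hf : 0 ≤ᵐ[μ] f) :
    ∫ x, f x ∂μ ≤ (∫⁻ x, ENNReal.ofReal (f x) ∂μ).toReal := by
  by_cases hi : MeasureTheory.Integrable f μ
  · rw [MeasureTheory.integral_eq_lintegral_of_nonneg_ae hf hi.aestronglyMeasurable]
  · rw [MeasureTheory.integral_undef hi]; exact ENNReal.toReal_nonneg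

private lemma aux_pointwise {w c q : ℝ} (hw : 0 < w) (hc : 0 < c) (hq : 1 < q) :
    w ^ (-(1/(q-1))) = (c ^ 2 / (w * c ^ (2*q))) ^ (1/(q-1)) * c ^ 2 := by
  have hq1 : 0 < q - 1 := by linarith
  have hcr : (0:ℝ) < c ^ (2*q) := Real.rpow_pos_of_pos hc _
  have e1 : c ^ 2 / (w * c ^ (2*q)) = c ^ (2 - 2*q) * w⁻¹ := by
    rw [Real.rpow_sub hc]
    rw [← Real.rpow_natCast c 2]
    push_cast
    field_simp
    try ring
  rw [e1, Real.mul_rpow (Real.rpow_nonneg hc.le _) (by positivity),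
    ← Real.rpow_mul hc.le, Real.inv_rpow hw.le]
  have e2 : (2 - 2*q) * (1/(q-1)) = -2 := by field_simp; ring
  rw [e2, Real.rpow_neg hw.le]
  rw [show ((-2:ℝ)) = -((2:ℕ):ℝ) by norm_num, Real.rpow_neg hc.le, Real.rpow_natCast]
  have h1 : (c:ℝ) ^ (2:ℕ) ≠ 0 := by positivity
  have h2 : (w:ℝ) ^ (1/(q-1)) ≠ 0 := by positivity
  field_simp

/-- a sufficient Kerman–Torchinsky type condition for membership in `B_q`. -/
theorem Bq_sufficient_condition (ω : ℂ → ℝ) (hw : IsWeight ω) (hpos : AEPos ω)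
    (q δ C : ℝ) (hq : 1 < q) (hδ1 : 1 / q < δ) (hδ2 : δ < 1) (hC : 0 < C)
    (h : ∀ a : ℂ, a ≠ 0 → ‖a‖ < 1 → ∀ E : Set ℂ, MeasurableSet E → E ⊆ cSq a →
      (∫ z in E, (1 - ‖z‖ ^ 2) ^ 2 ∂dA) / eArea (cSq a) ^ 2 ≤
        C * ((∫ z in E, ω z * (1 - ‖z‖ ^ 2) ^ (2 * q) ∂dA) /
          ∫ z in cSq a, ω z * (1 - ‖z‖ ^ 2) ^ (2 * q) ∂dA) ^ δ) :
    MemBq q ω := by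
  classical
  obtain ⟨hw_nn, hw_int⟩ := hw
  have hq0 : (0:ℝ) < q := by linarith
  have hq1 : (0:ℝ) < q - 1 := by linarith
  have hδ0 : (0:ℝ) < δ := lt_trans (by positivity) hδ1
  have h1δ : (0:ℝ) < 1 - δ := by linarith
  have hδq : 1 < δ * q := by rw [div_lt_iff₀ hq0] at hδ1; linarith
  have hAB : 1/(q-1) < δ/(1-δ) := by rw [div_lt_div_iff₀ hq1 h1δ]; nlinarith
  have hA0 : (0:ℝ) < 1/(q-1) := by positivity
  have hr0 : (0:ℝ) < (2:ℝ) ^ (1/(q-1) - δ/(1-δ)) := Real.rpow_pos_of_pos two_pos _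
  have hr1 : (2:ℝ) ^ (1/(q-1) - δ/(1-δ)) < 1 :=
    Real.rpow_lt_one_of_one_lt_of_neg one_lt_two (by linarith)
  have hcs : 0 < 1 + (2:ℝ)^(1/(q-1)) * (1 - (2:ℝ)^(1/(q-1) - δ/(1-δ)))⁻¹ := by
    have hh : 0 < (2:ℝ)^(1/(q-1)) * (1 - (2:ℝ)^(1/(q-1) - δ/(1-δ)))⁻¹ :=
      mul_pos (Real.rpow_pos_of_pos two_pos _) (inv_pos.mpr (by linarith))
    linarith
  set cs : ℝ := 1 + (2:ℝ)^(1/(q-1)) * (1 - (2:ℝ)^(1/(q-1) - δ/(1-δ)))⁻¹ with hcs_def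
  -- measurable modification of ω
  have hmeas : AEStronglyMeasurable ω (dA.restrict uD) := hw_int.aestronglyMeasurable
  set ω' : ℂ → ℝ := fun z => max (hmeas.mk ω z) 0 with hω'_def
  have hω'meas : Measurable ω' := (hmeas.stronglyMeasurable_mk.measurable).max measurable_const
  have hω'nn : ∀ z, 0 ≤ ω' z := fun z => le_max_right _ _
  have huDmeas : MeasurableSet uD := Metric.isOpen_ball.measurableSet
  have hωae : ∀ᵐ z ∂(dA.restrict uD), ω z = ω' z := by
    filter_upwards [hmeas.ae_eq_mk] with z hz
    simp only [hω'_def]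
    rw [← hz]
    exact (max_eq_left (hw_nn z)).symm
  have hωfull : ∀ᵐ z ∂dA, z ∈ uD → ω z = ω' z := (ae_restrict_iff' huDmeas).mp hωae
  refine ⟨hq, hpos, cs ^ (q-1) * C ^ q, fun a ha0 ha1 => ?_⟩
  have hSsub : cSq a ⊆ uD := fun w hw' => by
    simp only [uD, Metric.mem_ball, Complex.dist_eq, sub_zero]
    exact hw'.2.1
  have hSmeas : MeasurableSet (cSq a) := by
    have h1 : Measurable fun w : ℂ => ‖w‖ := continuous_norm.measurable
    have h2 : Measurable fun w : ℂ => |Complex.arg (a * (starRingEnd ℂ) w)| :=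
      (Complex.measurable_arg.comp (measurable_const.mul RCLike.continuous_conj.measurable)).abs
    have heq : cSq a = {w : ℂ | ‖a‖ < ‖w‖} ∩
        ({w : ℂ | ‖w‖ < 1} ∩
         {w : ℂ | |Complex.arg (a * (starRingEnd ℂ) w)| < (1 - ‖a‖) / 2}) := rfl
    rw [heq]
    exact (measurableSet_lt measurable_const h1).inter
      ((measurableSet_lt h1 measurable_const).inter (measurableSet_lt h2 measurable_const))
  have hb_pos : ∀ z ∈ cSq a, 0 < 1 - ‖z‖ ^ 2 := by
    intro z hz
    have h1 : ‖z‖ < 1 := hz.2.1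
    have h2 : 0 ≤ ‖z‖ := norm_nonneg z
    nlinarith
  have hb_le : ∀ z : ℂ, 1 - ‖z‖ ^ 2 ≤ 1 := fun z => by
    have h2 : 0 ≤ ‖z‖ := norm_nonneg z
    nlinarith
  have hπpos : (0:ℝ) < Real.pi := Real.pi_pos
  have hvol_fin : volume (cSq a) ≠ ⊤ :=
    ne_top_of_le_ne_top measure_ball_lt_top.ne (measure_mono hSsub)
  have hdA_fin : dA (cSq a) ≠ ⊤ := by
    simp only [dA, Measure.smul_apply, smul_eq_mul]
    exact ENNReal.mul_ne_top (ENNReal.inv_ne_top.mpr (ENNReal.ofReal_pos.mpr hπpos).ne')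
      hvol_fin
  have hu_cont : Continuous fun z : ℂ => (1 - ‖z‖ ^ 2) ^ 2 :=
    (continuous_const.sub (continuous_norm.pow 2)).pow 2
  have hu_nn : ∀ z : ℂ, (0:ℝ) ≤ (1 - ‖z‖ ^ 2) ^ 2 := fun z => sq_nonneg _
  have hu_int : IntegrableOn (fun z : ℂ => (1 - ‖z‖ ^ 2) ^ 2) (cSq a) dA := by
    refine Measure.integrableOn_of_bounded hdA_fin hu_cont.aestronglyMeasurable (M := 1) ?_
    refine (ae_restrict_iff' hSmeas).mpr (ae_of_all _ fun z hz => ?_)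
    rw [Real.norm_eq_abs, _root_.abs_of_nonneg (hu_nn z)]
    have h1 := hb_pos z hz
    have h2 := hb_le z
    nlinarith
  have hrpow_meas : Measurable fun z : ℂ => (1 - ‖z‖ ^ 2) ^ (2*q) := by
    apply Measurable.pow
    · exact (continuous_const.sub (continuous_norm.pow 2)).measurable
    · exact measurable_const
  have hg_int : IntegrableOn (fun z => ω z * (1 - ‖z‖ ^ 2) ^ (2*q)) (cSq a) dA := by
    have hbd : ∀ᵐ z ∂(dA.restrict (cSq a)),
        ‖ω z * (1 - ‖z‖ ^ 2) ^ (2*q)‖ ≤ ‖ω z‖ := by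
      refine (ae_restrict_iff' hSmeas).mpr (ae_of_all _ fun z hz => ?_)
      have h1 := hb_pos z hz
      have h2 : (1 - ‖z‖ ^ 2) ^ (2*q) ≤ 1 :=
        Real.rpow_le_one h1.le (hb_le z) (by linarith)
      have h3 : 0 ≤ (1 - ‖z‖ ^ 2) ^ (2*q) := Real.rpow_nonneg h1.le _
      rw [Real.norm_eq_abs, Real.norm_eq_abs, abs_mul]
      calc |ω z| * |(1 - ‖z‖ ^ 2) ^ (2*q)| ≤ |ω z| * 1 := by
            rw [_root_.abs_of_nonneg h3]
            exact mul_le_mul_of_nonneg_left h2 (abs_nonneg _)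
        _ = |ω z| := mul_one _
    have hsm : AEStronglyMeasurable (fun z => ω z * (1 - ‖z‖ ^ 2) ^ (2*q))
        (dA.restrict (cSq a)) := by
      have h1 : AEStronglyMeasurable ω (dA.restrict (cSq a)) :=
        hmeas.mono_measure (Measure.restrict_mono hSsub le_rfl)
      exact h1.mul hrpow_meas.aestronglyMeasurable
    exact Integrable.mono (hw_int.mono_set hSsub) hsm hbd
  have hωS : ∀ᵐ z ∂(dA.restrict (cSq a)), ω z = ω' z :=
    ae_restrict_of_ae_restrict_of_subset hSsub hωae
  have hg'_int : IntegrableOn (fun z => ω' z * (1 - ‖z‖ ^ 2) ^ (2*q)) (cSq a) dA :=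
    hg_int.congr (hωS.mono fun z hz => by simp only [hz])
  have hν_nn : 0 ≤ ∫ z in cSq a, ω z * (1 - ‖z‖ ^ 2) ^ (2*q) ∂dA :=
    setIntegral_nonneg hSmeas fun z hz =>
      mul_nonneg (hw_nn z) (Real.rpow_nonneg (hb_pos z hz).le _)
  show ((∫ z in cSq a, ω z * (1 - ‖z‖ ^ 2) ^ (2 * q) ∂dA) / eArea (cSq a) ^ 2) *
      ((∫ z in cSq a, ω z ^ (-(1 / (q - 1))) ∂dA) / eArea (cSq a) ^ 2) ^ (q - 1) ≤
      cs ^ (q-1) * C ^ q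
  by_cases hS0 : dA (cSq a) = 0
  · have h0 : dA.restrict (cSq a) = 0 := Measure.restrict_eq_zero.mpr hS0
    rw [h0]
    simp only [integral_zero_measure, zero_div]
    rw [Real.zero_rpow hq1.ne', zero_mul]
    exact mul_nonneg (Real.rpow_nonneg hcs.le _) (Real.rpow_nonneg hC.le _)
  · have hvol_ne : volume (cSq a) ≠ 0 := by
      intro hv
      apply hS0
      simp only [dA, Measure.smul_apply, smul_eq_mul, hv, mul_zero]
    have heA : 0 < eArea (cSq a) := ENNReal.toReal_pos hvol_ne hvol_fin
    have hsq : 0 < eArea (cSq a) ^ 2 := by positivity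
    have hμS_pos : 0 < ∫ z in cSq a, (1 - ‖z‖ ^ 2) ^ 2 ∂dA := by
      rw [setIntegral_pos_iff_support_of_nonneg_ae (ae_of_all _ hu_nn) hu_int]
      have hsupp : cSq a ⊆ Function.support fun z : ℂ => (1 - ‖z‖ ^ 2) ^ 2 := by
        intro z hz
        simp only [Function.mem_support]
        exact pow_ne_zero 2 (hb_pos z hz).ne'
      rw [Set.inter_eq_right.mpr hsupp]
      exact pos_iff_ne_zero.mpr hS0
    have hself := h a ha0 ha1 (cSq a) hSmeas subset_rfl
    have hν_pos : 0 < ∫ z in cSq a, ω z * (1 - ‖z‖ ^ 2) ^ (2*q) ∂dA := by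
      rcases eq_or_lt_of_le hν_nn with h0 | h0
      · exfalso
        rw [← h0] at hself
        simp only [zero_div, Real.zero_rpow hδ0.ne', mul_zero] at hself
        have := div_pos hμS_pos hsq
        linarith
      · exact h0
    have hμS_le : (∫ z in cSq a, (1 - ‖z‖ ^ 2) ^ 2 ∂dA) ≤ C * eArea (cSq a) ^ 2 := by
      have h1 := hself
      rw [div_self hν_pos.ne', Real.one_rpow, mul_one] at h1
      exact (div_le_iff₀ hsq).mp h1
    set F : ℂ → ℝ := fun z =>
      (1 - ‖z‖ ^ 2) ^ 2 / (ω' z * (1 - ‖z‖ ^ 2) ^ (2*q)) with hF_def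
    have hFmeas : Measurable F := hu_cont.measurable.div (hω'meas.mul hrpow_meas)
    have hFnnS : ∀ z ∈ cSq a, 0 ≤ F z := fun z hz => by
      simp only [hF_def]
      exact div_nonneg (hu_nn z) (mul_nonneg (hω'nn z) (Real.rpow_nonneg (hb_pos z hz).le _))
    set K : ℝ := (C * eArea (cSq a) ^ 2) ^ (1/(1-δ)) *
      (∫ z in cSq a, ω z * (1 - ‖z‖ ^ 2) ^ (2*q) ∂dA) ^ (-(δ/(1-δ))) with hK_def
    have hKpos : 0 < K :=
      mul_pos (Real.rpow_pos_of_pos (by positivity) _) (Real.rpow_pos_of_pos hν_pos _)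
    have hweak : ∀ t, 0 < t →
        ∫ z in cSq a ∩ {z | t < F z}, (1 - ‖z‖ ^ 2) ^ 2 ∂dA ≤
          K * t ^ (-(δ/(1-δ))) := by
      intro t ht
      have hEmeas : MeasurableSet (cSq a ∩ {z | t < F z}) :=
        hSmeas.inter (measurableSet_lt measurable_const hFmeas)
      have hEsub : cSq a ∩ {z | t < F z} ⊆ cSq a := inter_subset_left
      have hhE := h a ha0 ha1 (cSq a ∩ {z | t < F z}) hEmeas hEsub
      have hmE_nn : 0 ≤ ∫ z in cSq a ∩ {z | t < F z}, (1 - ‖z‖ ^ 2) ^ 2 ∂dA :=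
        setIntegral_nonneg hEmeas fun z _ => hu_nn z
      have hgE_nn : 0 ≤ ∫ z in cSq a ∩ {z | t < F z},
          ω z * (1 - ‖z‖ ^ 2) ^ (2*q) ∂dA :=
        setIntegral_nonneg hEmeas fun z hz =>
          mul_nonneg (hw_nn z) (Real.rpow_nonneg (hb_pos z (hEsub hz)).le _)
      have hgE : (∫ z in cSq a ∩ {z | t < F z}, ω z * (1 - ‖z‖ ^ 2) ^ (2*q) ∂dA) ≤
          (∫ z in cSq a ∩ {z | t < F z}, (1 - ‖z‖ ^ 2) ^ 2 ∂dA) * t⁻¹ := by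
        have e1 : ∫ z in cSq a ∩ {z | t < F z}, ω z * (1 - ‖z‖ ^ 2) ^ (2*q) ∂dA
            = ∫ z in cSq a ∩ {z | t < F z}, ω' z * (1 - ‖z‖ ^ 2) ^ (2*q) ∂dA := by
          apply setIntegral_congr_ae hEmeas
          filter_upwards [hωfull] with z hz hzE
          rw [hz (hSsub (hEsub hzE))]
        rw [e1]
        have e2 : ∫ z in cSq a ∩ {z | t < F z}, ω' z * (1 - ‖z‖ ^ 2) ^ (2*q) ∂dA
            ≤ ∫ z in cSq a ∩ {z | t < F z}, (1 - ‖z‖ ^ 2) ^ 2 * t⁻¹ ∂dA := by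
          refine setIntegral_mono_on (hg'_int.mono_set hEsub)
            ((hu_int.mono_set hEsub).mul_const t⁻¹) hEmeas (fun z hz => ?_)
          have hzS := hEsub hz
          have hb := hb_pos z hzS
          have hg'nn : 0 ≤ ω' z * (1 - ‖z‖ ^ 2) ^ (2*q) :=
            mul_nonneg (hω'nn z) (Real.rpow_nonneg hb.le _)
          have htF : t < F z := hz.2
          rcases eq_or_lt_of_le hg'nn with h0 | h0
          · exfalso
            simp only [hF_def] at htF
            rw [← h0, div_zero] at htF
            linarith
          · simp only [hF_def] at htF
            rw [lt_div_iff₀ h0] at htF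
            rw [← sub_nonneg]
            calc (0:ℝ) ≤ ((1 - ‖z‖ ^ 2) ^ 2 - t * (ω' z * (1 - ‖z‖ ^ 2) ^ (2*q))) * t⁻¹ := by
                  apply mul_nonneg _ (inv_nonneg.mpr ht.le)
                  linarith
              _ = (1 - ‖z‖ ^ 2) ^ 2 * t⁻¹ - ω' z * (1 - ‖z‖ ^ 2) ^ (2*q) := by
                  field_simp
                  try ring
        calc ∫ z in cSq a ∩ {z | t < F z}, ω' z * (1 - ‖z‖ ^ 2) ^ (2*q) ∂dA
            ≤ ∫ z in cSq a ∩ {z | t < F z}, (1 - ‖z‖ ^ 2) ^ 2 * t⁻¹ ∂dA := e2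
          _ = (∫ z in cSq a ∩ {z | t < F z}, (1 - ‖z‖ ^ 2) ^ 2 ∂dA) * t⁻¹ :=
              integral_mul_const _ _
      have hsolve := aux_solve hC hsq hν_pos ht hδ0 hδ2 hmE_nn hgE_nn hgE hhE
      calc (∫ z in cSq a ∩ {z | t < F z}, (1 - ‖z‖ ^ 2) ^ 2 ∂dA)
          ≤ (C * eArea (cSq a) ^ 2) ^ (1/(1-δ)) *
            (t * (∫ z in cSq a, ω z * (1 - ‖z‖ ^ 2) ^ (2*q) ∂dA)) ^ (-(δ/(1-δ))) :=
            hsolve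
        _ = K * t ^ (-(δ/(1-δ))) := by
            rw [hK_def, Real.mul_rpow ht.le hν_nn]
            ring
    set t₀ : ℝ := (K / (∫ z in cSq a, (1 - ‖z‖ ^ 2) ^ 2 ∂dA)) ^
      (1/(δ/(1-δ))) with ht₀_def
    have ht₀pos : 0 < t₀ := Real.rpow_pos_of_pos (div_pos hKpos hμS_pos) _
    have hlayer := aux_layer dA hSmeas F (fun z => (1 - ‖z‖ ^ 2) ^ 2)
      hFmeas hFnnS hu_nn hu_int ht₀pos hKpos.le hA0 hAB hweak
    have hposS : ∀ᵐ z ∂(dA.restrict (cSq a)), 0 < ω z :=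
      ae_restrict_of_ae_restrict_of_subset hSsub hpos
    have hcongr : ∫⁻ z in cSq a, ENNReal.ofReal (ω z ^ (-(1/(q-1)))) ∂dA =
        ∫⁻ z in cSq a, ENNReal.ofReal (F z ^ (1/(q-1)) * (1 - ‖z‖ ^ 2) ^ 2) ∂dA := by
      apply lintegral_congr_ae
      filter_upwards [hposS, hωS, ae_restrict_mem hSmeas] with z h1 h2 h3
      congr 1
      rw [h2]
      simp only [hF_def]
      exact aux_pointwise (h2 ▸ h1) (hb_pos z h3) hq
    have hint_nn : (0:ℂ → ℝ) ≤ᵐ[dA.restrict (cSq a)] fun z => ω z ^ (-(1/(q-1))) :=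
      ae_of_all _ fun z => Real.rpow_nonneg (hw_nn z) _
    have hIle : (∫ z in cSq a, ω z ^ (-(1/(q-1))) ∂dA) ≤
        (∫⁻ z in cSq a, ENNReal.ofReal (ω z ^ (-(1/(q-1)))) ∂dA).toReal :=
      aux_int_le _ _ hint_nn
    have hQnn : 0 ≤ cs * ((K ^ ((1/(q-1))/(δ/(1-δ)))) *
        (∫ z in cSq a, (1 - ‖z‖ ^ 2) ^ 2 ∂dA) ^ (1 - (1/(q-1))/(δ/(1-δ)))) :=
      mul_nonneg hcs.le (mul_nonneg (Real.rpow_nonneg hKpos.le _)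
        (Real.rpow_nonneg hμS_pos.le _))
    have hIbound : (∫ z in cSq a, ω z ^ (-(1/(q-1))) ∂dA) ≤
        cs * ((K ^ ((1/(q-1))/(δ/(1-δ)))) *
          (∫ z in cSq a, (1 - ‖z‖ ^ 2) ^ 2 ∂dA) ^ (1 - (1/(q-1))/(δ/(1-δ)))) := by
      refine hIle.trans ?_
      rw [hcongr]
      refine ENNReal.toReal_le_of_le_ofReal hQnn ?_
      refine hlayer.trans (le_of_eq ?_)
      apply congrArg ENNReal.ofReal
      rw [ht₀_def, hcs_def]
      exact aux_t0 (by positivity) hKpos hμS_pos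
    have hInn : 0 ≤ ∫ z in cSq a, ω z ^ (-(1/(q-1))) ∂dA :=
      setIntegral_nonneg hSmeas fun z _ => Real.rpow_nonneg (hw_nn z) _
    rw [hK_def] at hIbound
    exact aux_assemble hq hδ0 hδq hδ2 hC hν_pos hsq hμS_pos.le hcs hInn hμS_le hIbound

end
end

section
/- Let ω be a weight on 𝔻 such that ω(S(a)) > 0 for all a ∈ 𝔻\{0}. Then the following statements are equivalent: (i) ω ∈ D̂(𝔻); (ii) there exist β = β(ω) > 0 and C = C(ω) ≥ 1 such that ω(S(a))/(1-|a|)^β ≤ C ω(S(a'))/(1-|a'|)^β for all 0 < |a| ≤ |a'| < 1 with arg a = arg a'; (iii) for each K > 0 there exists C = C(ω,K) > 0 such that ω(S(a)) ≤ C ω(S( ((K+|a|)/(K+1)) e^{i arg a} )) for all a ∈ 𝔻\{0}; (iv) there exist η = η(ω) > 0 and C = C(η,ω) > 0 such that ∫_𝔻 ω(z)/|1-āz|^η dA(z) ≤ C ω(S(a))/(1-|a|)^η for all a ∈ 𝔻\{0}. -/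
open MeasureTheory Complex Set Filter Topology
open scoped ENNReal NNReal

noncomputable section

namespace DhatAux

lemma mem_uD_iff {z : ℂ} : z ∈ uD ↔ ‖z‖ < 1 := by
  simp [uD, Metric.mem_ball, Complex.dist_eq]

lemma cSq_subset_uD (b : ℂ) : cSq b ⊆ uD := fun w hw => mem_uD_iff.mpr hw.2.1

lemma measurableSet_uD : MeasurableSet uD := measurableSet_ball

lemma measurableSet_cSq (b : ℂ) : MeasurableSet (cSq b) := by
  have h1 : Measurable fun w : ℂ => ‖w‖ := continuous_norm.measurable
  have hc : Measurable fun w : ℂ => (starRingEnd ℂ) w := Complex.continuous_conj.measurable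
  have h2 : Measurable fun w : ℂ => |Complex.arg (b * (starRingEnd ℂ) w)| :=
    (Complex.measurable_arg.comp (measurable_const.mul hc)).abs
  have : cSq b = {w | ‖b‖ < ‖w‖} ∩
      ({w | ‖w‖ < 1} ∩
        {w | |Complex.arg (b * (starRingEnd ℂ) w)| < (1 - ‖b‖) / 2}) := by
    ext w; simp only [cSq, mem_setOf_eq, mem_inter_iff]
  rw [this]
  exact (measurableSet_lt measurable_const h1).inter
    ((measurableSet_lt h1 measurable_const).inter (measurableSet_lt h2 measurable_const))

variable {ω : ℂ → ℝ}

lemma intOn (hw : IsWeight ω) {s : Set ℂ} (hs : s ⊆ uD) : IntegrableOn ω s dA :=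
  hw.2.mono_set hs

lemma wInt_nonneg (hw : IsWeight ω) (s : Set ℂ) : 0 ≤ wInt ω s :=
  integral_nonneg fun z => hw.1 z

lemma wInt_mono (hw : IsWeight ω) {s t : Set ℂ} (hst : s ⊆ t) (ht : t ⊆ uD) :
    wInt ω s ≤ wInt ω t :=
  setIntegral_mono_set (intOn hw ht) (Eventually.of_forall fun z => hw.1 z)
    (HasSubset.Subset.eventuallyLE hst)

/-- The point at radius `t` in the direction of `a`. -/
def ptd (a : ℂ) (t : ℝ) : ℂ := (t : ℂ) * (a / (‖a‖ : ℂ))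

lemma ofReal_abs_ne_zero {a : ℂ} (ha : a ≠ 0) : ((‖a‖ : ℝ) : ℂ) ≠ 0 :=
  Complex.ofReal_ne_zero.mpr (norm_ne_zero_iff.mpr ha)

lemma abs_dir {a : ℂ} (ha : a ≠ 0) : ‖a / (‖a‖ : ℂ)‖ = 1 := by
  rw [norm_div, Complex.norm_real, Real.norm_eq_abs, _root_.abs_of_nonneg (norm_nonneg a),
    div_self (norm_ne_zero_iff.mpr ha)]

lemma abs_ptd {a : ℂ} (ha : a ≠ 0) {t : ℝ} (ht : 0 ≤ t) : ‖ptd a t‖ = t := by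
  rw [ptd, norm_mul, Complex.norm_real, Real.norm_eq_abs, abs_dir ha, mul_one, _root_.abs_of_nonneg ht]

lemma ptd_ne_zero {a : ℂ} (ha : a ≠ 0) {t : ℝ} (ht : 0 < t) : ptd a t ≠ 0 := by
  intro h0
  have h := abs_ptd ha ht.le
  rw [h0, norm_zero] at h
  exact ht.ne' h.symm

lemma ptd_abs (a : ℂ) (ha : a ≠ 0) : ptd a (‖a‖) = a := by
  rw [ptd, mul_div_cancel₀ _ (ofReal_abs_ne_zero ha)]

lemma ptd_mul_conj {a : ℂ} (ha : a ≠ 0) (t : ℝ) (w : ℂ) :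
    ptd a t * (starRingEnd ℂ) w = ((t / ‖a‖ : ℝ) : ℂ) * (a * (starRingEnd ℂ) w) := by
  have h := ofReal_abs_ne_zero ha
  rw [ptd]
  push_cast
  field_simp

lemma arg_ptd_mul_conj {a : ℂ} (ha : a ≠ 0) {t : ℝ} (ht : 0 < t) (w : ℂ) :
    Complex.arg (ptd a t * (starRingEnd ℂ) w) = Complex.arg (a * (starRingEnd ℂ) w) := by
  rw [ptd_mul_conj ha, Complex.arg_real_mul _ (div_pos ht (norm_pos_iff.mpr ha))]

lemma arg_ptd {a : ℂ} (ha : a ≠ 0) {t : ℝ} (ht : 0 < t) :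
    Complex.arg (ptd a t) = Complex.arg a := by
  have h : ptd a t = ((t / ‖a‖ : ℝ) : ℂ) * a := by
    have := ofReal_abs_ne_zero ha
    rw [ptd]; push_cast; field_simp
  rw [h, Complex.arg_real_mul _ (div_pos ht (norm_pos_iff.mpr ha))]

lemma cSq_ptd {a : ℂ} (ha : a ≠ 0) {t : ℝ} (ht : 0 < t) :
    cSq (ptd a t) = {w : ℂ | t < ‖w‖ ∧ ‖w‖ < 1 ∧
      |Complex.arg (a * (starRingEnd ℂ) w)| < (1 - t) / 2} := by
  ext w
  simp only [cSq, mem_setOf_eq, abs_ptd ha ht.le, arg_ptd_mul_conj ha ht]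

lemma cSq_ptd_subset {a : ℂ} (ha : a ≠ 0) {t t' : ℝ} (ht : 0 < t) (htt : t ≤ t') :
    cSq (ptd a t') ⊆ cSq (ptd a t) := by
  have ht' : 0 < t' := ht.trans_le htt
  rw [cSq_ptd ha ht, cSq_ptd ha ht']
  intro w hw
  exact ⟨htt.trans_lt hw.1, hw.2.1, hw.2.2.trans_le (by linarith)⟩

lemma eq_ptd_of_arg_eq {a a' : ℂ} (ha : a ≠ 0) (ha' : a' ≠ 0)
    (h : Complex.arg a = Complex.arg a') : a' = ptd a (‖a'‖) := by
  have hdir : a / (‖a‖ : ℂ) = Complex.exp (Complex.arg a * Complex.I) := by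
    rw [div_eq_iff (ofReal_abs_ne_zero ha), mul_comm]
    exact (Complex.norm_mul_exp_arg_mul_I a).symm
  calc a' = (‖a'‖ : ℂ) * Complex.exp (Complex.arg a' * Complex.I) :=
        (Complex.norm_mul_exp_arg_mul_I a').symm
  _ = ptd a (‖a'‖) := by rw [ptd, hdir, h]


lemma dhat_t (hw : IsWeight ω) (h : DhatD ω) :
    ∃ C : ℝ, 1 ≤ C ∧ ∀ a : ℂ, a ≠ 0 → ∀ t : ℝ, 0 < t → t < 1 →
      wInt ω (cSq (ptd a t)) ≤ C * wInt ω (cSq (ptd a ((1 + t) / 2))) := by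
  obtain ⟨C0, hC0, hP⟩ := h
  refine ⟨max C0 1, le_max_right _ _, fun a ha t ht ht1 => ?_⟩
  have hb := ptd_ne_zero ha ht
  have habs : ‖ptd a t‖ = t := abs_ptd ha ht.le
  have h2 := hP (ptd a t) hb (by rw [habs]; exact ht1)
  have hpt : (((1 + ‖ptd a t‖) / 2 : ℝ) : ℂ) *
      (ptd a t / (‖ptd a t‖ : ℂ)) = ptd a ((1 + t) / 2) := by
    rw [habs]
    have htC : (t : ℂ) ≠ 0 := Complex.ofReal_ne_zero.mpr ht.ne'
    have haC := ofReal_abs_ne_zero ha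
    rw [ptd, ptd]
    push_cast
    field_simp
  rw [hpt] at h2
  calc wInt ω (cSq (ptd a t)) ≤ C0 * wInt ω (cSq (ptd a ((1 + t) / 2))) := h2
  _ ≤ max C0 1 * wInt ω (cSq (ptd a ((1 + t) / 2))) :=
      mul_le_mul_of_nonneg_right (le_max_left _ _) (wInt_nonneg hw _)

lemma dhat_iter (hw : IsWeight ω) {C : ℝ} (hC : 1 ≤ C)
    (hD : ∀ a : ℂ, a ≠ 0 → ∀ t : ℝ, 0 < t → t < 1 →
      wInt ω (cSq (ptd a t)) ≤ C * wInt ω (cSq (ptd a ((1 + t) / 2)))) :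
    ∀ n : ℕ, ∀ a : ℂ, a ≠ 0 → ∀ t : ℝ, 0 < t → t < 1 →
      wInt ω (cSq (ptd a t)) ≤ C ^ n * wInt ω (cSq (ptd a (1 - (1 - t) / 2 ^ n))) := by
  intro n
  induction n with
  | zero => intro a ha t ht ht1; simp [sub_sub_cancel]
  | succ n ih =>
    intro a ha t ht ht1
    have h2n : (0 : ℝ) < 2 ^ n := by positivity
    set t' := 1 - (1 - t) / 2 ^ n with htdef
    have htt' : t ≤ t' := by
      have hp : (1:ℝ) ≤ 2 ^ n := by
        calc (1:ℝ) = 1 ^ n := (one_pow n).symm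
        _ ≤ 2 ^ n := pow_le_pow_left₀ (by norm_num) (by norm_num) n
      have h1 : (1 - t) / 2 ^ n ≤ 1 - t := div_le_self (by linarith) hp
      rw [htdef]; linarith
    have ht'0 : 0 < t' := lt_of_lt_of_le ht htt'
    have ht'1 : t' < 1 := by
      have : 0 < (1 - t) / 2 ^ n := div_pos (by linarith) h2n
      rw [htdef]; linarith
    have step := hD a ha t' ht'0 ht'1
    have hmid : (1 + t') / 2 = 1 - (1 - t) / 2 ^ (n + 1) := by
      rw [htdef, pow_succ]
      field_simp
      ring
    have hCn : (0:ℝ) ≤ C ^ n := pow_nonneg (by linarith) n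
    calc wInt ω (cSq (ptd a t)) ≤ C ^ n * wInt ω (cSq (ptd a t')) := ih a ha t ht ht1
    _ ≤ C ^ n * (C * wInt ω (cSq (ptd a ((1 + t') / 2)))) :=
        mul_le_mul_of_nonneg_left step hCn
    _ = C ^ (n + 1) * wInt ω (cSq (ptd a ((1 + t') / 2))) := by ring
    _ = C ^ (n + 1) * wInt ω (cSq (ptd a (1 - (1 - t) / 2 ^ (n + 1)))) := by rw [hmid]

lemma keyA (hw : IsWeight ω) (h : DhatD ω) :
    ∃ β : ℝ, 1 ≤ β ∧ ∀ a : ℂ, a ≠ 0 → ∀ t t' : ℝ, 0 < t → t ≤ t' → t' < 1 →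
      wInt ω (cSq (ptd a t)) ≤
        2 ^ β * ((1 - t) / (1 - t')) ^ β * wInt ω (cSq (ptd a t')) := by
  obtain ⟨C, hC1, hD⟩ := dhat_t hw h
  set β := max 1 (Real.logb 2 C) with hβ
  have hβ1 : 1 ≤ β := le_max_left _ _
  have hβ0 : 0 ≤ β := by linarith
  have hC2 : C ≤ 2 ^ β := by
    have h1 : C = 2 ^ Real.logb 2 C :=
      (Real.rpow_logb (by norm_num) (by norm_num) (by linarith)).symm
    rw [h1]
    exact Real.rpow_le_rpow_of_exponent_le (by norm_num) (le_max_right _ _)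
  refine ⟨β, hβ1, fun a ha t t' ht htt' ht'1 => ?_⟩
  have ht'0 : 0 < t' := lt_of_lt_of_le ht htt'
  have ht1 : t < 1 := lt_of_le_of_lt htt' ht'1
  have h1t : 0 < 1 - t := by linarith
  have h1t' : 0 < 1 - t' := by linarith
  set x := (1 - t) / (1 - t') with hx
  have hx0 : 0 < x := by positivity
  have hx1 : 1 ≤ x := (one_le_div h1t').mpr (by linarith)
  have hlogb0 : 0 ≤ Real.logb 2 x := Real.logb_nonneg (by norm_num) hx1
  set n := ⌈Real.logb 2 x⌉₊ with hn
  have h2n_ge : x ≤ 2 ^ (n : ℝ) := by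
    calc x = 2 ^ Real.logb 2 x := (Real.rpow_logb (by norm_num) (by norm_num) hx0).symm
    _ ≤ 2 ^ (n : ℝ) := Real.rpow_le_rpow_of_exponent_le (by norm_num) (Nat.le_ceil _)
  have h2n_le : (2 : ℝ) ^ (n : ℝ) ≤ 2 * x := by
    have hle : (n : ℝ) ≤ Real.logb 2 x + 1 := by
      have := Nat.ceil_lt_add_one hlogb0
      rw [hn]; linarith
    calc (2 : ℝ) ^ (n : ℝ) ≤ 2 ^ (Real.logb 2 x + 1) :=
        Real.rpow_le_rpow_of_exponent_le (by norm_num) hle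
    _ = 2 ^ Real.logb 2 x * 2 := by rw [Real.rpow_add (by norm_num), Real.rpow_one]
    _ = 2 * x := by rw [Real.rpow_logb (by norm_num) (by norm_num) hx0]; ring
  have h2npos : (0 : ℝ) < 2 ^ n := by positivity
  have hrw : (2 : ℝ) ^ (n : ℝ) = 2 ^ n := Real.rpow_natCast 2 n
  have ht''ge : t' ≤ 1 - (1 - t) / 2 ^ n := by
    have hle : (1 - t) / 2 ^ n ≤ 1 - t' := by
      rw [div_le_iff₀ h2npos]
      have hx2 : x ≤ 2 ^ n := by rw [← hrw]; exact h2n_ge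
      calc 1 - t = x * (1 - t') := by rw [hx]; field_simp
      _ ≤ 2 ^ n * (1 - t') := mul_le_mul_of_nonneg_right hx2 h1t'.le
      _ = (1 - t') * 2 ^ n := by ring
    linarith
  have hiter := dhat_iter hw hC1 hD n a ha t ht ht1
  have hmono : wInt ω (cSq (ptd a (1 - (1 - t) / 2 ^ n))) ≤ wInt ω (cSq (ptd a t')) :=
    wInt_mono hw (cSq_ptd_subset ha ht'0 ht''ge) (cSq_subset_uD _)
  have hC0 : (0:ℝ) ≤ C := by linarith
  have hCn : C ^ n ≤ 2 ^ β * x ^ β := by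
    calc C ^ n ≤ (2 ^ β : ℝ) ^ n := pow_le_pow_left₀ hC0 hC2 n
    _ = ((2:ℝ) ^ β) ^ (n : ℝ) := (Real.rpow_natCast _ n).symm
    _ = ((2:ℝ) ^ (n:ℝ)) ^ β := by
        rw [← Real.rpow_mul (by norm_num : (0:ℝ) ≤ 2),
          ← Real.rpow_mul (by norm_num : (0:ℝ) ≤ 2), mul_comm]
    _ ≤ (2 * x) ^ β := Real.rpow_le_rpow (by positivity) h2n_le hβ0
    _ = 2 ^ β * x ^ β := Real.mul_rpow (by norm_num) hx0.le
  calc wInt ω (cSq (ptd a t)) ≤ C ^ n * wInt ω (cSq (ptd a (1 - (1 - t) / 2 ^ n))) := hiter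
  _ ≤ C ^ n * wInt ω (cSq (ptd a t')) :=
      mul_le_mul_of_nonneg_left hmono (pow_nonneg hC0 n)
  _ ≤ 2 ^ β * x ^ β * wInt ω (cSq (ptd a t')) :=
      mul_le_mul_of_nonneg_right hCn (wInt_nonneg hw _)


lemma lb_one_sub {c z : ℂ} (hz : ‖z‖ ≤ 1) :
    1 - ‖c‖ * ‖z‖ ≤ ‖1 - (starRingEnd ℂ) c * z‖ := by
  have h := norm_sub_norm_le (1 : ℂ) ((starRingEnd ℂ) c * z)
  simpa [norm_mul, Complex.norm_conj] using h

lemma abs_one_sub_conj (c z : ℂ) :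
    ‖1 - (starRingEnd ℂ) c * z‖ = ‖1 - c * (starRingEnd ℂ) z‖ := by
  rw [← Complex.norm_conj (1 - c * (starRingEnd ℂ) z)]
  congr 1
  simp [map_sub, norm_mul, Complex.conj_conj]

lemma lb_arg {u : ℂ} (hu : 1 / 4 ≤ ‖u‖) :
    |Complex.arg u| / (2 * Real.pi) ≤ ‖1 - u‖ := by
  have hpi := Real.pi_pos
  have hu0 : u ≠ 0 := by
    intro h; rw [h, norm_zero] at hu; linarith
  have habs : 0 < ‖u‖ := norm_pos_iff.mpr hu0
  by_cases hcase : |Complex.arg u| ≤ Real.pi / 2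
  · have hsin : 2 / Real.pi * |Complex.arg u| ≤ |Real.sin (Complex.arg u)| := by
      rcases le_or_gt 0 (Complex.arg u) with h0 | h0
      · rw [_root_.abs_of_nonneg h0]
        exact (Real.mul_le_sin h0 (by rwa [_root_.abs_of_nonneg h0] at hcase)).trans
          (le_abs_self _)
      · rw [abs_of_neg h0]
        have h2 := Real.mul_le_sin (by linarith : (0:ℝ) ≤ -Complex.arg u)
          (by rwa [abs_of_neg h0] at hcase)
        rw [Real.sin_neg] at h2
        exact h2.trans (neg_le_abs _)
    have him : |u.im| = ‖u‖ * |Real.sin (Complex.arg u)| := by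
      rw [Complex.sin_arg, abs_div, _root_.abs_of_nonneg (norm_nonneg u)]
      field_simp
    have h1 : |u.im| ≤ ‖1 - u‖ := by
      have h' := Complex.abs_im_le_norm (1 - u)
      simpa using h'
    calc |Complex.arg u| / (2 * Real.pi) = 1 / 4 * (2 / Real.pi * |Complex.arg u|) := by
          field_simp; ring
    _ ≤ ‖u‖ * |Real.sin (Complex.arg u)| :=
        mul_le_mul hu hsin (by positivity) (norm_nonneg u)
    _ = |u.im| := him.symm
    _ ≤ ‖1 - u‖ := h1
  · push_neg at hcase
    have hb := Complex.abs_arg_le_pi u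
    have hcos : Real.cos (Complex.arg u) ≤ 0 := by
      rcases le_or_gt 0 (Complex.arg u) with h0 | h0
      · apply Real.cos_nonpos_of_pi_div_two_le_of_le
        · rw [_root_.abs_of_nonneg h0] at hcase; linarith
        · have := Complex.arg_le_pi u; linarith
      · rw [← Real.cos_neg]
        apply Real.cos_nonpos_of_pi_div_two_le_of_le
        · rw [abs_of_neg h0] at hcase; linarith
        · have := Complex.neg_pi_lt_arg u; linarith
    have hre : u.re ≤ 0 := by
      have h3 : u.re / ‖u‖ ≤ 0 := by rw [← Complex.cos_arg hu0]; exact hcos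
      have h5 := div_mul_cancel₀ u.re (ne_of_gt habs)
      nlinarith
    have h1 : (1 : ℝ) ≤ ‖1 - u‖ := by
      have h' := Complex.re_le_norm (1 - u)
      simp only [Complex.sub_re, Complex.one_re] at h'
      linarith
    calc |Complex.arg u| / (2 * Real.pi) ≤ Real.pi / (2 * Real.pi) := by gcongr
    _ ≤ 1 := by rw [div_le_one (by positivity)]; linarith
    _ ≤ ‖1 - u‖ := h1

lemma lb_region {a : ℂ} (ha : a ≠ 0) (hta : 1 / 2 ≤ ‖a‖)
    (hta1 : ‖a‖ < 1) {s : ℝ} (hs : 1 / 2 ≤ s) (hs1 : s < 1) {z : ℂ}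
    (hz : ‖z‖ < 1) (hns : z ∉ cSq (ptd a s)) :
    (1 - s) / (4 * Real.pi) ≤ ‖1 - (starRingEnd ℂ) a * z‖ := by
  have hpi := Real.pi_pos
  have hpi3 := Real.pi_gt_three
  have h4pi : (1 : ℝ) ≤ 4 * Real.pi := by nlinarith
  rw [abs_one_sub_conj]
  set u := a * (starRingEnd ℂ) z with hu
  have habsu : ‖u‖ = ‖a‖ * ‖z‖ := by
    rw [hu, norm_mul, Complex.norm_conj]
  have hG1 : 1 - ‖u‖ ≤ ‖1 - u‖ := by
    have h := norm_sub_norm_le (1 : ℂ) u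
    simpa using h
  rw [cSq_ptd ha (by linarith : (0:ℝ) < s)] at hns
  simp only [mem_setOf_eq, not_and, not_lt] at hns
  by_cases hzs : ‖z‖ ≤ s
  · have h5 : ‖u‖ ≤ ‖z‖ := by
      rw [habsu]
      nlinarith [norm_nonneg z]
    have h6 : 1 - s ≤ ‖1 - u‖ := by linarith
    calc (1 - s) / (4 * Real.pi) ≤ 1 - s := div_le_self (by linarith) h4pi
    _ ≤ _ := h6
  · push_neg at hzs
    have harg : (1 - s) / 2 ≤ |Complex.arg u| := hns hzs hz
    have hu4 : 1 / 4 ≤ ‖u‖ := by rw [habsu]; nlinarith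
    have h7 := lb_arg hu4
    calc (1 - s) / (4 * Real.pi) = ((1 - s) / 2) / (2 * Real.pi) := by ring
    _ ≤ |Complex.arg u| / (2 * Real.pi) := by gcongr
    _ ≤ _ := h7

lemma ub_on_cSq {a : ℂ} (ha : a ≠ 0) (ht1 : ‖a‖ < 1) {z : ℂ} (hz : z ∈ cSq a) :
    ‖1 - (starRingEnd ℂ) (ptd a ((1 + ‖a‖) / 2)) * z‖ ≤
      3 * (1 - ‖a‖) := by
  set t := ‖a‖ with htdef
  have ht0 : 0 < t := norm_pos_iff.mpr ha
  set b := ptd a ((1 + t) / 2) with hb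
  have habsb : ‖b‖ = (1 + t) / 2 := abs_ptd ha (by linarith)
  rw [abs_one_sub_conj]
  set u := b * (starRingEnd ℂ) z with hu
  have hz1 : t < ‖z‖ := hz.1
  have hz2 : ‖z‖ < 1 := hz.2.1
  have hz3 : |Complex.arg (a * (starRingEnd ℂ) z)| < (1 - t) / 2 := hz.2.2
  have hargu : Complex.arg u = Complex.arg (a * (starRingEnd ℂ) z) :=
    arg_ptd_mul_conj ha (by linarith) z
  have hargu2 : |Complex.arg u| ≤ (1 - t) / 2 := by rw [hargu]; exact hz3.le
  have habsu : ‖u‖ = (1 + t) / 2 * ‖z‖ := by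
    rw [hu, norm_mul, Complex.norm_conj, habsb]
  have habsu1 : ‖u‖ < 1 := by rw [habsu]; nlinarith
  set e := Complex.exp ((Complex.arg u : ℂ) * Complex.I) with he
  have habse : ‖e‖ = 1 := Complex.norm_exp_ofReal_mul_I _
  have h1e : ‖1 - e‖ ≤ 2 * |Complex.arg u| := by
    have harg1 : ‖(Complex.arg u : ℂ) * Complex.I‖ ≤ 1 := by
      rw [norm_mul, Complex.norm_I, mul_one, Complex.norm_real, Real.norm_eq_abs]
      linarith
    have h2 := Complex.norm_exp_sub_one_le harg1
    rw [norm_mul, Complex.norm_I, mul_one, Complex.norm_real, Real.norm_eq_abs] at h2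
    calc ‖1 - e‖ = ‖e - 1‖ := by
          rw [← norm_neg (e - 1)]; ring_nf
    _ ≤ 2 * |Complex.arg u| := h2
  have h2u : ‖e - u‖ = 1 - ‖u‖ := by
    have hexp : u = (‖u‖ : ℂ) * e := (Complex.norm_mul_exp_arg_mul_I u).symm
    have hdiff : e - u = ((1 : ℂ) - (‖u‖ : ℂ)) * e := by
      conv_lhs => rw [hexp]
      ring
    rw [hdiff, norm_mul, habse, mul_one, ← Complex.ofReal_one, ← Complex.ofReal_sub,
      Complex.norm_real, Real.norm_eq_abs, _root_.abs_of_nonneg (by linarith)]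
  have htri : ‖1 - u‖ ≤ ‖1 - e‖ + ‖e - u‖ :=
    norm_sub_le_norm_sub_add_norm_sub 1 e u
  have habsu2 : (1 + t) / 2 * t ≤ ‖u‖ := by
    rw [habsu]; nlinarith
  calc ‖1 - u‖ ≤ 2 * |Complex.arg u| + (1 - ‖u‖) := by
        rw [← h2u]; linarith
  _ ≤ 2 * ((1 - t) / 2) + (1 - (1 + t) / 2 * t) := by
      have := habsu2
      gcongr
  _ ≤ 3 * (1 - t) := by nlinarith


lemma integrableOn_kernel (hw : IsWeight ω) {c : ℂ} (hc : ‖c‖ < 1) {η : ℝ}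
    (hη : 0 < η) :
    IntegrableOn (fun z => ω z / ‖1 - (starRingEnd ℂ) c * z‖ ^ η) uD dA := by
  have hc0 : 0 < 1 - ‖c‖ := by linarith
  have hlb : ∀ z ∈ uD, 1 - ‖c‖ ≤ ‖1 - (starRingEnd ℂ) c * z‖ := by
    intro z hz
    have hz1 : ‖z‖ ≤ 1 := (mem_uD_iff.mp hz).le
    calc 1 - ‖c‖ ≤ 1 - ‖c‖ * ‖z‖ := by
          nlinarith [norm_nonneg c, norm_nonneg z]
    _ ≤ _ := lb_one_sub hz1
  have hcont : ContinuousOn (fun z => ‖1 - (starRingEnd ℂ) c * z‖ ^ η) uD := by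
    apply ContinuousOn.rpow_const
    · exact (continuous_norm.comp
        (continuous_const.sub (continuous_const.mul continuous_id))).continuousOn
    · intro z hz
      exact Or.inl (ne_of_gt (lt_of_lt_of_le hc0 (hlb z hz)))
  have hmeas : AEStronglyMeasurable
      (fun z => ω z / ‖1 - (starRingEnd ℂ) c * z‖ ^ η) (dA.restrict uD) :=
    (hw.2.aestronglyMeasurable.aemeasurable.div
      (hcont.aestronglyMeasurable measurableSet_uD).aemeasurable).aestronglyMeasurable
  apply Integrable.mono' (hw.2.const_mul (((1 - ‖c‖) ^ η)⁻¹)) hmeas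
  rw [ae_restrict_iff' measurableSet_uD]
  apply Eventually.of_forall
  intro z hz
  have h1 := hlb z hz
  have hb0 : 0 < (1 - ‖c‖) ^ η := Real.rpow_pos_of_pos hc0 η
  have hb1 : (1 - ‖c‖) ^ η ≤ ‖1 - (starRingEnd ℂ) c * z‖ ^ η :=
    Real.rpow_le_rpow hc0.le h1 hη.le
  have hnn : 0 ≤ ω z / ‖1 - (starRingEnd ℂ) c * z‖ ^ η :=
    div_nonneg (hw.1 z) (Real.rpow_nonneg (norm_nonneg _) η)
  rw [Real.norm_eq_abs, _root_.abs_of_nonneg hnn, div_eq_mul_inv, mul_comm]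
  exact mul_le_mul_of_nonneg_right (inv_anti₀ hb0 hb1) (hw.1 z)

lemma arg_exp_small {δ : ℝ} (h1 : -Real.pi < δ) (h2 : δ ≤ Real.pi) :
    Complex.arg (Complex.exp ((δ : ℂ) * Complex.I)) = δ := by
  rw [Complex.exp_mul_I]
  exact Complex.arg_cos_add_sin_mul_I ⟨h1, h2⟩

lemma exists_small_square (a : ℂ) (ha : a ≠ 0) :
    ∃ k : ℕ, k < 51 ∧
      cSq (((3 / 4 : ℝ) : ℂ) * Complex.exp ((((k : ℝ) / 8 : ℝ) : ℂ) * Complex.I)) ⊆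
        cSq (ptd a (1 / 2)) := by
  have hpi := Real.pi_pos
  have hpi3 := Real.pi_gt_three
  have hpi4 := Real.pi_lt_d2
  set α := Complex.arg a with hα
  have hα1 : -Real.pi < α := Complex.neg_pi_lt_arg a
  have hα2 : α ≤ Real.pi := Complex.arg_le_pi a
  set α' : ℝ := if 0 ≤ α then α else α + 2 * Real.pi with hα'
  have hα'0 : 0 ≤ α' := by
    rw [hα']; split_ifs with h
    · exact h
    · push_neg at h; linarith
  have hα'2 : α' ≤ 2 * Real.pi := by
    rw [hα']; split_ifs with h
    · linarith
    · push_neg at h; linarith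
  have hexpα : Complex.exp ((α' : ℂ) * Complex.I) = Complex.exp ((α : ℂ) * Complex.I) := by
    rw [hα']; split_ifs with h
    · rfl
    · push_cast
      rw [add_mul, Complex.exp_add]
      have h2pi : Complex.exp ((2 * Real.pi : ℂ) * Complex.I) = 1 := by
        simpa using Complex.exp_two_pi_mul_I
      rw [h2pi, mul_one]
  set k : ℕ := ⌊8 * α' + 1 / 2⌋₊ with hk
  have hk1 : (k : ℝ) ≤ 8 * α' + 1 / 2 := Nat.floor_le (by linarith)
  have hk2 : 8 * α' + 1 / 2 < (k : ℝ) + 1 := Nat.lt_floor_add_one _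
  have hk51 : k < 51 := by
    have : (k : ℝ) < 51 := by linarith
    exact_mod_cast this
  refine ⟨k, hk51, ?_⟩
  set θ : ℝ := (k : ℝ) / 8 with hθ
  set δ : ℝ := α' - θ with hδ
  have hδ1 : |δ| ≤ 1 / 16 := by
    rw [abs_le, hδ, hθ]
    constructor <;> linarith
  -- membership
  intro w hwmem
  have habsb : ‖((3 / 4 : ℝ) : ℂ) * Complex.exp ((θ : ℂ) * Complex.I)‖ = 3 / 4 := by
    rw [norm_mul, Complex.norm_real, Real.norm_eq_abs, Complex.norm_exp_ofReal_mul_I]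
    norm_num
  have hw1 : (3 : ℝ) / 4 < ‖w‖ := by
    have := hwmem.1; rwa [habsb] at this
  have hw2 : ‖w‖ < 1 := hwmem.2.1
  have hw3 : |Complex.arg (((3 / 4 : ℝ) : ℂ) * Complex.exp ((θ : ℂ) * Complex.I) *
      (starRingEnd ℂ) w)| < 1 / 8 := by
    have h := hwmem.2.2
    have h14 : ((1:ℝ) - 3/4)/2 = 1/8 := by norm_num
    rw [habsb, h14] at h
    exact h
  have hw0 : w ≠ 0 := by
    intro h; rw [h, norm_zero] at hw1; linarith
  set v := Complex.exp ((θ : ℂ) * Complex.I) * (starRingEnd ℂ) w with hv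
  have hargv : Complex.arg (((3 / 4 : ℝ) : ℂ) * Complex.exp ((θ : ℂ) * Complex.I) *
      (starRingEnd ℂ) w) = Complex.arg v := by
    rw [mul_assoc, Complex.arg_real_mul _ (by norm_num : (0:ℝ) < 3/4)]
  rw [hargv] at hw3
  have hv0 : v ≠ 0 := mul_ne_zero (Complex.exp_ne_zero _) (by simpa using hw0)
  -- arg of target
  have hkey : |Complex.arg (a * (starRingEnd ℂ) w)| < 1 / 4 := by
    have hsplit : a * (starRingEnd ℂ) w =
        ((‖a‖ : ℝ) : ℂ) * (Complex.exp ((δ : ℂ) * Complex.I) * v) := by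
      have hestep : Complex.exp ((α : ℂ) * Complex.I) =
          Complex.exp ((δ : ℂ) * Complex.I) * Complex.exp ((θ : ℂ) * Complex.I) := by
        rw [← Complex.exp_add, ← hexpα]
        congr 1
        rw [hδ]; push_cast; ring
      conv_lhs => rw [← Complex.norm_mul_exp_arg_mul_I a]
      rw [← hα, hestep, hv]
      ring
    rw [hsplit, Complex.arg_real_mul _ (norm_pos_iff.mpr ha)]
    have hδle := abs_le.mp hδ1
    have hargδ : Complex.arg (Complex.exp ((δ : ℂ) * Complex.I)) = δ :=
      arg_exp_small (by linarith [hδle.1]) (by linarith [hδle.2])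
    have hargmul : Complex.arg (Complex.exp ((δ : ℂ) * Complex.I) * v) =
        δ + Complex.arg v := by
      have hwlt := abs_lt.mp hw3
      have h9 := Complex.arg_mul (Complex.exp_ne_zero ((δ : ℂ) * Complex.I)) hv0
        (by rw [hargδ]
            exact Set.mem_Ioc.mpr ⟨by linarith, by linarith⟩)
      rw [hargδ] at h9
      exact h9
    rw [hargmul]
    have h1 := abs_le.mp hδ1
    have h2 := abs_lt.mp hw3
    rw [abs_lt]; constructor <;> linarith
  rw [cSq_ptd ha (by norm_num : (0:ℝ) < 1/2)]
  refine ⟨by linarith, hw2, ?_⟩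
  have h14 : ((1:ℝ) - 1/2)/2 = 1/4 := by norm_num
  rw [h14]
  exact hkey

lemma m_lemma (hw : IsWeight ω)
    (hpos : ∀ a : ℂ, a ≠ 0 → ‖a‖ < 1 → 0 < wInt ω (cSq a)) :
    ∃ m : ℝ, 0 < m ∧ ∀ a : ℂ, a ≠ 0 → m ≤ wInt ω (cSq (ptd a (1 / 2))) := by
  classical
  set F : ℕ → ℝ :=
    fun k => wInt ω (cSq (((3 / 4 : ℝ) : ℂ) *
      Complex.exp ((((k : ℝ) / 8 : ℝ) : ℂ) * Complex.I))) with hF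
  have hFpos : ∀ k, 0 < F k := by
    intro k
    apply hpos
    · intro h
      have := congrArg (fun x : ℂ => ‖x‖) h
      rw [norm_mul, Complex.norm_real, Real.norm_eq_abs, Complex.norm_exp_ofReal_mul_I, norm_zero] at this
      norm_num at this
    · rw [norm_mul, Complex.norm_real, Real.norm_eq_abs, Complex.norm_exp_ofReal_mul_I, mul_one,
        _root_.abs_of_nonneg (by norm_num : (0:ℝ) ≤ 3/4)]
      norm_num
  have hne : (Finset.range 51).Nonempty := ⟨0, by simp⟩
  refine ⟨(Finset.range 51).inf' hne F, ?_, ?_⟩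
  · rw [Finset.lt_inf'_iff]
    exact fun k _ => hFpos k
  · intro a ha
    obtain ⟨k, hk51, hsub⟩ := exists_small_square a ha
    calc (Finset.range 51).inf' hne F ≤ F k := Finset.inf'_le _ (Finset.mem_range.mpr hk51)
    _ ≤ wInt ω (cSq (ptd a (1 / 2))) := wInt_mono hw hsub (cSq_subset_uD _)



lemma field_helper {A X D P Q : ℝ} (hA : A ≠ 0) (hX : X ≠ 0) (hD : D ≠ 0) (hP : P ≠ 0)
    (W : ℝ) :
    (A * X * D / P)⁻¹ * (Q * (Q * A) * W) = P * (Q * Q) * 2 * (X * 2)⁻¹ * (W / D) := by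
  field_simp

set_option maxHeartbeats 3000000 in
lemma main_iv (hw : IsWeight ω)
    (hpos : ∀ a : ℂ, a ≠ 0 → ‖a‖ < 1 → 0 < wInt ω (cSq a))
    (h : DhatD ω) :
    ∃ η C : ℝ, 0 < η ∧ 0 < C ∧ ∀ a : ℂ, a ≠ 0 → ‖a‖ < 1 →
      (∫ z in uD, ω z / ‖1 - (starRingEnd ℂ) a * z‖ ^ η ∂dA) ≤
        C * (wInt ω (cSq a) / (1 - ‖a‖) ^ η) := by
  obtain ⟨β, hβ1, hA⟩ := keyA hw h
  obtain ⟨m, hm, hmle⟩ := m_lemma hw hpos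
  have hpi := Real.pi_pos
  set η := β + 1 with hηdef
  have hη0 : 0 < η := by linarith
  have hβ0 : 0 ≤ β := by linarith
  set I0 := wInt ω uD with hI0
  have hI0nn : 0 ≤ I0 := wInt_nonneg hw uD
  have hIm : 0 ≤ I0 / m := div_nonneg hI0nn hm.le
  set K2 : ℝ := (4 * Real.pi) ^ η * 2 ^ (2 * β) * 2 with hK2
  have hK2pos : 0 < K2 := by positivity
  set C : ℝ := 2 ^ η * (I0 / m) + (1 + K2) + (16 * Real.pi) ^ η * (I0 / m) with hC
  have hCt1 : 0 ≤ 2 ^ η * (I0 / m) :=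
    mul_nonneg (Real.rpow_nonneg (by norm_num) η) hIm
  have hCt3 : 0 ≤ (16 * Real.pi) ^ η * (I0 / m) :=
    mul_nonneg (Real.rpow_nonneg (by positivity) η) hIm
  have hCpos : 0 < C := by rw [hC]; linarith
  refine ⟨η, C, hη0, hCpos, fun a ha ht1' => ?_⟩
  set t := ‖a‖ with htdef
  have ht1 : t < 1 := ht1'
  have ht0 : 0 < t := norm_pos_iff.mpr ha
  have h1t : 0 < 1 - t := by linarith
  set W := wInt ω (cSq a) with hWdef
  have hWnn : 0 ≤ W := wInt_nonneg hw _
  have hWt : wInt ω (cSq (ptd a t)) = W := by rw [hWdef, htdef, ptd_abs a ha]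
  have hpowpos : 0 < (1 - t) ^ η := Real.rpow_pos_of_pos h1t η
  set B := W / (1 - t) ^ η with hB
  have hBnn : 0 ≤ B := div_nonneg hWnn hpowpos.le
  set g : ℂ → ℝ := fun z => ω z / ‖1 - (starRingEnd ℂ) a * z‖ ^ η with hg
  have hgint : IntegrableOn g uD dA := integrableOn_kernel hw ht1' hη0
  -- basic lower bound valid on all of uD
  have hlb0 : ∀ z ∈ uD, 1 - t ≤ ‖1 - (starRingEnd ℂ) a * z‖ := by
    intro z hz
    have hz1 : ‖z‖ ≤ 1 := (mem_uD_iff.mp hz).le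
    calc 1 - t ≤ 1 - t * ‖z‖ := by nlinarith [norm_nonneg z]
    _ ≤ _ := by rw [htdef]; exact lb_one_sub hz1
  -- generic bound over a sub-region with a kernel lower bound
  have hbound : ∀ s : Set ℂ, MeasurableSet s → s ⊆ uD → ∀ c : ℝ, 0 < c →
      (∀ z ∈ s, c ≤ ‖1 - (starRingEnd ℂ) a * z‖) →
      (∫ z in s, g z ∂dA) ≤ (c ^ η)⁻¹ * wInt ω s := by
    intro s hms hsub c hc hlb
    have h1 : (∫ z in s, g z ∂dA) ≤ ∫ z in s, (c ^ η)⁻¹ * ω z ∂dA := by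
      apply setIntegral_mono_on (hgint.mono_set hsub) ((intOn hw hsub).const_mul _) hms
      intro z hz
      have h2 : c ^ η ≤ ‖1 - (starRingEnd ℂ) a * z‖ ^ η :=
        Real.rpow_le_rpow hc.le (hlb z hz) hη0.le
      have h3 : 0 < c ^ η := Real.rpow_pos_of_pos hc η
      show ω z / ‖1 - (starRingEnd ℂ) a * z‖ ^ η ≤ (c ^ η)⁻¹ * ω z
      rw [div_eq_mul_inv, mul_comm]
      exact mul_le_mul_of_nonneg_right (inv_anti₀ h3 h2) (hw.1 z)
    rwa [integral_const_mul] at h1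
  -- W dominates wInt at radius 1/2 bound
  have hI0le : I0 ≤ I0 / m * wInt ω (cSq (ptd a (1 / 2))) := by
    have h5 := hmle a ha
    calc I0 = I0 / m * m := by field_simp
    _ ≤ I0 / m * wInt ω (cSq (ptd a (1 / 2))) := mul_le_mul_of_nonneg_left h5 hIm
  have hWB : W ≤ B := by
    rw [hB, le_div_iff₀ hpowpos]
    have hle1 : (1 - t) ^ η ≤ 1 := Real.rpow_le_one h1t.le (by linarith) hη0.le
    nlinarith
  rcases le_or_gt t (1 / 2) with hcase | hcase
  · -- easy case : t ≤ 1/2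
    have hbig := hbound uD measurableSet_uD (subset_refl _) (1 / 2) (by norm_num)
      (fun z hz => le_trans (by linarith) (hlb0 z hz))
    have hinv : (((1:ℝ) / 2) ^ η)⁻¹ = 2 ^ η := by
      rw [one_div, Real.inv_rpow (by norm_num : (0:ℝ) ≤ 2), inv_inv]
    rw [hinv] at hbig
    have hWhalf : wInt ω (cSq (ptd a (1 / 2))) ≤ W := by
      rw [← hWt]
      exact wInt_mono hw (cSq_ptd_subset ha ht0 hcase) (cSq_subset_uD _)
    have hI0W : I0 ≤ I0 / m * W := by
      calc I0 ≤ I0 / m * wInt ω (cSq (ptd a (1 / 2))) := hI0le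
      _ ≤ I0 / m * W := mul_le_mul_of_nonneg_left hWhalf hIm
    have hCge : 2 ^ η * (I0 / m) ≤ C := by rw [hC]; linarith
    calc (∫ z in uD, g z ∂dA) ≤ 2 ^ η * I0 := hbig
    _ ≤ 2 ^ η * (I0 / m * W) := by
        have h2η : (0:ℝ) ≤ 2 ^ η := Real.rpow_nonneg (by norm_num) η
        exact mul_le_mul_of_nonneg_left hI0W h2η
    _ = 2 ^ η * (I0 / m) * W := by ring
    _ ≤ 2 ^ η * (I0 / m) * B := mul_le_mul_of_nonneg_left hWB hCt1
    _ ≤ C * B := mul_le_mul_of_nonneg_right hCge hBnn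
  · -- main case : t > 1/2
    have h2pow : ∀ n : ℕ, (1:ℝ) ≤ 2 ^ n := fun n => by
      calc (1:ℝ) = 1 ^ n := (one_pow n).symm
      _ ≤ 2 ^ n := pow_le_pow_left₀ (by norm_num) (by norm_num) n
    have hex : ∃ n : ℕ, 1 / 2 < 2 ^ (n + 1) * (1 - t) := by
      obtain ⟨n, hn⟩ := pow_unbounded_of_one_lt ((1 / 2) / (1 - t)) (by norm_num : (1:ℝ) < 2)
      rw [div_lt_iff₀ h1t] at hn
      refine ⟨n, ?_⟩
      have hmono : (2:ℝ) ^ n ≤ 2 ^ (n + 1) := by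
        apply pow_le_pow_right₀ (by norm_num) (Nat.le_succ n)
      nlinarith
    set M := Nat.find hex with hMdef
    have hM1 : 1 / 2 < 2 ^ (M + 1) * (1 - t) := Nat.find_spec hex
    have hM2 : 2 ^ M * (1 - t) ≤ 1 / 2 := by
      rcases Nat.eq_zero_or_pos M with h0 | h0
      · rw [h0, pow_zero, one_mul]; linarith
      · obtain ⟨k, hMk⟩ : ∃ k, M = k + 1 := ⟨M - 1, (Nat.succ_pred_eq_of_pos h0).symm⟩
        have hmin := Nat.find_min hex (show k < M by omega)
        push_neg at hmin
        rw [hMk]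
        exact hmin
    set tn : ℕ → ℝ := fun n => 1 - 2 ^ n * (1 - t) with htn
    have htn_half : ∀ n, n ≤ M → 1 / 2 ≤ tn n := by
      intro n hn
      have h5 : (2:ℝ) ^ n * (1 - t) ≤ 2 ^ M * (1 - t) :=
        mul_le_mul_of_nonneg_right (pow_le_pow_right₀ (by norm_num) hn) h1t.le
      simp only [htn]; linarith
    have htn_lt1 : ∀ n, tn n < 1 := by
      intro n
      have := mul_pos (pow_pos (by norm_num : (0:ℝ) < 2) n) h1t
      simp only [htn]; linarith
    have htn_le_t : ∀ n, tn n ≤ t := by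
      intro n
      have h5 : (1:ℝ) * (1 - t) ≤ 2 ^ n * (1 - t) :=
        mul_le_mul_of_nonneg_right (h2pow n) h1t.le
      simp only [htn]; linarith
    have htn0 : ∀ n, n ≤ M → 0 < tn n := fun n hn =>
      lt_of_lt_of_le (by norm_num) (htn_half n hn)
    have htn_zero : tn 0 = t := by simp [htn]
    set T : ℕ → Set ℂ := fun n => cSq (ptd a (tn n)) with hT
    have hTsub : ∀ n, T n ⊆ uD := fun n => cSq_subset_uD _
    -- step 0
    have hstep0 : (∫ z in T 0, g z ∂dA) ≤ B := by
      have hbd := hbound (T 0) (measurableSet_cSq _) (hTsub 0) (1 - t) h1t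
        (fun z hz => hlb0 z (hTsub 0 hz))
      have hT0 : wInt ω (T 0) = W := by rw [hT]; simp only [htn_zero]; exact hWt
      rw [hT0] at hbd
      calc (∫ z in T 0, g z ∂dA) ≤ ((1 - t) ^ η)⁻¹ * W := hbd
      _ = B := by rw [hB]; field_simp
    -- inductive bound
    have hmain : ∀ n, n ≤ M →
        (∫ z in T n, g z ∂dA) ≤ (1 + K2) * B - K2 * (1 / 2) ^ n * B := by
      intro n
      induction n with
      | zero =>
        intro _
        exact hstep0.trans (le_of_eq (by rw [pow_zero]; ring))
      | succ n ih =>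
        intro hn1
        have hnM : n ≤ M := le_trans (Nat.le_succ n) hn1
        have hpre := ih hnM
        have htnle : tn (n + 1) ≤ tn n := by
          have h5 : (2:ℝ) ^ n * (1 - t) ≤ 2 ^ (n + 1) * (1 - t) :=
            mul_le_mul_of_nonneg_right (pow_le_pow_right₀ (by norm_num) (Nat.le_succ n)) h1t.le
          simp only [htn]; linarith
        have hsubT : T n ⊆ T (n + 1) := cSq_ptd_subset ha (htn0 (n + 1) hn1) htnle
        have hunion : (∫ z in T (n + 1), g z ∂dA) =
            (∫ z in T n, g z ∂dA) + ∫ z in T (n + 1) \ T n, g z ∂dA := by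
          have hd := setIntegral_union (disjoint_sdiff_self_right (x := T n) (y := T (n+1)))
            ((measurableSet_cSq _).diff (measurableSet_cSq _))
            (hgint.mono_set (hTsub n))
            (hgint.mono_set ((Set.diff_subset).trans (hTsub (n + 1))))
          rwa [Set.union_diff_cancel hsubT] at hd
        have hXpos : (0:ℝ) < 2 ^ n := pow_pos (by norm_num) n
        have hcpos : (0:ℝ) < 2 ^ n * (1 - t) / (4 * Real.pi) := by positivity
        have hlbn : ∀ z ∈ T (n + 1) \ T n,
            2 ^ n * (1 - t) / (4 * Real.pi) ≤ ‖1 - (starRingEnd ℂ) a * z‖ := by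
          intro z hz
          have hzU : z ∈ uD := hTsub (n + 1) hz.1
          have h6 := lb_region ha (by rw [← htdef]; linarith) ht1' (htn_half n hnM)
            (htn_lt1 n) (mem_uD_iff.mp hzU) hz.2
          have h7 : 1 - tn n = 2 ^ n * (1 - t) := by simp only [htn]; ring
          rwa [h7] at h6
        have hpiece := hbound (T (n + 1) \ T n)
          ((measurableSet_cSq _).diff (measurableSet_cSq _))
          ((Set.diff_subset).trans (hTsub (n + 1))) _ hcpos hlbn
        have hwd : wInt ω (T (n + 1) \ T n) ≤ wInt ω (T (n + 1)) :=
          wInt_mono hw Set.diff_subset (hTsub (n + 1))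
        have hkA := hA a ha (tn (n + 1)) t (htn0 (n + 1) hn1) (htn_le_t (n + 1)) ht1
        have hratio : (1 - tn (n + 1)) / (1 - t) = 2 ^ (n + 1) := by
          simp only [htn]
          rw [sub_sub_cancel, mul_div_assoc, div_self h1t.ne', mul_one]
        rw [hratio, hWt] at hkA
        have hinvnn : (0:ℝ) ≤ ((2 ^ n * (1 - t) / (4 * Real.pi)) ^ η)⁻¹ :=
          inv_nonneg.mpr (Real.rpow_nonneg hcpos.le η)
        have harith : ((2 ^ n * (1 - t) / (4 * Real.pi)) ^ η)⁻¹ *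
            (2 ^ β * ((2:ℝ) ^ (n + 1)) ^ β * W) = K2 * (1 / 2) ^ (n + 1) * B := by
          have h2 : ((2:ℝ) ^ n * (1 - t) / (4 * Real.pi)) ^ η =
              ((2:ℝ) ^ n) ^ η * (1 - t) ^ η / (4 * Real.pi) ^ η := by
            rw [Real.div_rpow (by positivity) (by positivity),
              Real.mul_rpow (by positivity) h1t.le]
          have h3 : ((2:ℝ) ^ n) ^ η = ((2:ℝ) ^ n) ^ β * (2:ℝ) ^ n := by
            rw [hηdef, Real.rpow_add hXpos, Real.rpow_one]
          have h4 : ((2:ℝ) ^ (n + 1)) ^ β = 2 ^ β * ((2:ℝ) ^ n) ^ β := by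
            rw [pow_succ, mul_comm ((2:ℝ) ^ n) 2, Real.mul_rpow (by norm_num) hXpos.le]
          have h6 : (2:ℝ) ^ (2 * β) = 2 ^ β * 2 ^ β := by
            rw [two_mul, Real.rpow_add (by norm_num : (0:ℝ) < 2)]
          have h5 : ((1:ℝ) / 2) ^ (n + 1) = ((2:ℝ) ^ n * 2)⁻¹ := by
            rw [div_pow, one_pow, pow_succ, one_div]
          have hne1 : ((2:ℝ) ^ n) ^ β ≠ 0 := ne_of_gt (Real.rpow_pos_of_pos hXpos β)
          have hne2 : ((1:ℝ) - t) ^ η ≠ 0 := ne_of_gt hpowpos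
          have hne3 : ((4:ℝ) * Real.pi) ^ η ≠ 0 :=
            ne_of_gt (Real.rpow_pos_of_pos (by positivity) η)
          rw [hB, hK2, h2, h3, h4, h6, h5]
          exact field_helper hne1 (ne_of_gt hXpos) hne2 hne3 W
        have hnew : (∫ z in T (n + 1) \ T n, g z ∂dA) ≤ K2 * (1 / 2) ^ (n + 1) * B := by
          calc (∫ z in T (n + 1) \ T n, g z ∂dA)
              ≤ ((2 ^ n * (1 - t) / (4 * Real.pi)) ^ η)⁻¹ * wInt ω (T (n + 1) \ T n) := hpiece
          _ ≤ ((2 ^ n * (1 - t) / (4 * Real.pi)) ^ η)⁻¹ *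
              (2 ^ β * ((2:ℝ) ^ (n + 1)) ^ β * W) :=
            mul_le_mul_of_nonneg_left (le_trans hwd hkA) hinvnn
          _ = K2 * (1 / 2) ^ (n + 1) * B := harith
        rw [hunion]
        calc (∫ z in T n, g z ∂dA) + (∫ z in T (n + 1) \ T n, g z ∂dA)
            ≤ ((1 + K2) * B - K2 * (1 / 2) ^ n * B) + K2 * (1 / 2) ^ (n + 1) * B :=
          add_le_add hpre hnew
        _ = (1 + K2) * B - K2 * (1 / 2) ^ (n + 1) * B := by rw [pow_succ]; ring
    -- final decomposition
    have hTMsub : T M ⊆ uD := hTsub M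
    have hsplit : (∫ z in uD, g z ∂dA) =
        (∫ z in T M, g z ∂dA) + ∫ z in uD \ T M, g z ∂dA := by
      have hd := setIntegral_union (disjoint_sdiff_self_right (x := T M) (y := uD))
        (measurableSet_uD.diff (measurableSet_cSq _))
        (hgint.mono_set hTMsub)
        (hgint.mono_set Set.diff_subset)
      rwa [Set.union_diff_cancel hTMsub] at hd
    have hquarter : (1:ℝ) / 4 < 2 ^ M * (1 - t) := by
      have h5 := hM1
      rw [pow_succ] at h5
      linarith
    have hlbfar : ∀ z ∈ uD \ T M,
        1 / (16 * Real.pi) ≤ ‖1 - (starRingEnd ℂ) a * z‖ := by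
      intro z hz
      have h6 := lb_region ha (by rw [← htdef]; linarith) ht1' (htn_half M le_rfl)
        (htn_lt1 M) (mem_uD_iff.mp hz.1) hz.2
      have h7 : 1 - tn M = 2 ^ M * (1 - t) := by simp only [htn]; ring
      rw [h7] at h6
      calc 1 / (16 * Real.pi) = (1 / 4) / (4 * Real.pi) := by ring
      _ ≤ (2 ^ M * (1 - t)) / (4 * Real.pi) :=
        (div_le_div_iff_of_pos_right (by positivity)).mpr hquarter.le
      _ ≤ _ := h6
    have hfar := hbound (uD \ T M) (measurableSet_uD.diff (measurableSet_cSq _))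
      Set.diff_subset _ (by positivity : (0:ℝ) < 1 / (16 * Real.pi)) hlbfar
    have hinv16 : (((1:ℝ) / (16 * Real.pi)) ^ η)⁻¹ = (16 * Real.pi) ^ η := by
      rw [one_div, Real.inv_rpow (by positivity : (0:ℝ) ≤ 16 * Real.pi), inv_inv]
    rw [hinv16] at hfar
    have hwfar : wInt ω (uD \ T M) ≤ I0 := wInt_mono hw Set.diff_subset (subset_refl _)
    -- bound wInt at 1/2 through keyA
    have hhalfA := hA a ha (1 / 2) t (by norm_num) (by linarith) ht1
    rw [hWt] at hhalfA
    have hcomb : 2 ^ β * ((1 - 1 / 2) / (1 - t)) ^ β = ((1 - t)⁻¹) ^ β := by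
      rw [← Real.mul_rpow (by norm_num) (by positivity)]
      congr 1
      rw [show (1:ℝ) - 1 / 2 = 1 / 2 by norm_num]
      field_simp
    rw [hcomb] at hhalfA
    have hhalfB : wInt ω (cSq (ptd a (1 / 2))) ≤ B := by
      have h8 : ((1 - t)⁻¹) ^ β * W = W / (1 - t) ^ β := by
        rw [Real.inv_rpow h1t.le]; field_simp
      rw [h8] at hhalfA
      have h9 : (1 - t) ^ η ≤ (1 - t) ^ β :=
        Real.rpow_le_rpow_of_exponent_ge h1t (by linarith) (by rw [hηdef]; linarith)
      have h10 : W / (1 - t) ^ β ≤ W / (1 - t) ^ η := by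
        apply div_le_div_of_nonneg_left hWnn hpowpos h9
      rw [hB]
      exact le_trans hhalfA h10
    have hfarB : (∫ z in uD \ T M, g z ∂dA) ≤ (16 * Real.pi) ^ η * (I0 / m) * B := by
      have hI0B : I0 ≤ I0 / m * B := by
        calc I0 ≤ I0 / m * wInt ω (cSq (ptd a (1 / 2))) := hI0le
        _ ≤ I0 / m * B := mul_le_mul_of_nonneg_left hhalfB hIm
      calc (∫ z in uD \ T M, g z ∂dA) ≤ (16 * Real.pi) ^ η * wInt ω (uD \ T M) := hfar
      _ ≤ (16 * Real.pi) ^ η * I0 := by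
          have : (0:ℝ) ≤ (16 * Real.pi) ^ η := Real.rpow_nonneg (by positivity) η
          exact mul_le_mul_of_nonneg_left hwfar this
      _ ≤ (16 * Real.pi) ^ η * (I0 / m * B) := by
          have : (0:ℝ) ≤ (16 * Real.pi) ^ η := Real.rpow_nonneg (by positivity) η
          exact mul_le_mul_of_nonneg_left hI0B this
      _ = (16 * Real.pi) ^ η * (I0 / m) * B := by ring
    have hTM : (∫ z in T M, g z ∂dA) ≤ (1 + K2) * B := by
      have h12 : 0 ≤ K2 * (1 / 2 : ℝ) ^ M * B :=
        mul_nonneg (mul_nonneg hK2pos.le (by positivity)) hBnn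
      exact (hmain M le_rfl).trans (by linarith)
    have hfin : (1 + K2) * B + (16 * Real.pi) ^ η * (I0 / m) * B + 2 ^ η * (I0 / m) * B
        = C * B := by rw [hC]; ring
    have hextra : 0 ≤ 2 ^ η * (I0 / m) * B := mul_nonneg hCt1 hBnn
    calc (∫ z in uD, g z ∂dA)
        = (∫ z in T M, g z ∂dA) + ∫ z in uD \ T M, g z ∂dA := hsplit
    _ ≤ (1 + K2) * B + (16 * Real.pi) ^ η * (I0 / m) * B := add_le_add hTM hfarB
    _ ≤ C * B := by linarith [hfin, hextra]


set_option maxHeartbeats 1000000 in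
lemma iv_to_dhat (hw : IsWeight ω)
    (h : ∃ η C : ℝ, 0 < η ∧ 0 < C ∧ ∀ a : ℂ, a ≠ 0 → ‖a‖ < 1 →
      (∫ z in uD, ω z / ‖1 - (starRingEnd ℂ) a * z‖ ^ η ∂dA) ≤
        C * (wInt ω (cSq a) / (1 - ‖a‖) ^ η)) : DhatD ω := by
  obtain ⟨η, C, hη, hC, hP⟩ := h
  refine ⟨6 ^ η * C, by positivity, fun a ha ht1' => ?_⟩
  set t := ‖a‖ with htdef
  have ht1 : t < 1 := ht1'
  have ht0 : 0 < t := norm_pos_iff.mpr ha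
  have h1t : 0 < 1 - t := by linarith
  set b := ptd a ((1 + t) / 2) with hb
  have hbnz : b ≠ 0 := ptd_ne_zero ha (by linarith)
  have habsb : ‖b‖ = (1 + t) / 2 := abs_ptd ha (by linarith)
  have hb1 : ‖b‖ < 1 := by rw [habsb]; linarith
  set g : ℂ → ℝ := fun z => ω z / ‖1 - (starRingEnd ℂ) b * z‖ ^ η with hg
  have hgint : IntegrableOn g uD dA := integrableOn_kernel hw hb1 hη
  have hgnn : ∀ z, 0 ≤ g z := fun z =>
    div_nonneg (hw.1 z) (Real.rpow_nonneg (norm_nonneg _) η)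
  have hPb := hP b hbnz hb1
  have h3 : 1 - ‖b‖ = (1 - t) / 2 := by rw [habsb]; ring
  rw [h3] at hPb
  have hpt : ∀ z ∈ cSq a, ω z ≤ (3 * (1 - t)) ^ η * g z := by
    intro z hz
    have hub := ub_on_cSq ha ht1' hz
    have hzu : ‖z‖ < 1 := hz.2.1
    have hlb : 0 < ‖1 - (starRingEnd ℂ) b * z‖ := by
      have h4 := lb_one_sub (c := b) (z := z) hzu.le
      have h5 : ‖b‖ * ‖z‖ < 1 := by
        nlinarith [norm_nonneg z, norm_nonneg b]
      linarith
    have hXpos : 0 < ‖1 - (starRingEnd ℂ) b * z‖ ^ η :=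
      Real.rpow_pos_of_pos hlb η
    have hXle : ‖1 - (starRingEnd ℂ) b * z‖ ^ η ≤ (3 * (1 - t)) ^ η :=
      Real.rpow_le_rpow (norm_nonneg _) hub hη.le
    calc ω z = ω z / (‖1 - (starRingEnd ℂ) b * z‖ ^ η) *
          (‖1 - (starRingEnd ℂ) b * z‖ ^ η) := by field_simp
    _ ≤ ω z / (‖1 - (starRingEnd ℂ) b * z‖ ^ η) * (3 * (1 - t)) ^ η :=
        mul_le_mul_of_nonneg_left hXle (hgnn z)
    _ = (3 * (1 - t)) ^ η * g z := by rw [hg]; ring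
  have h1 : (∫ z in cSq a, ω z ∂dA) ≤ ∫ z in cSq a, (3 * (1 - t)) ^ η * g z ∂dA :=
    setIntegral_mono_on (intOn hw (cSq_subset_uD a))
      ((hgint.mono_set (cSq_subset_uD a)).const_mul _) (measurableSet_cSq a) hpt
  rw [integral_const_mul] at h1
  have h2 : (∫ z in cSq a, g z ∂dA) ≤ ∫ z in uD, g z ∂dA :=
    setIntegral_mono_set hgint (Eventually.of_forall hgnn)
      (HasSubset.Subset.eventuallyLE (cSq_subset_uD a))
  have hfac : (3 * (1 - t)) ^ η * (C * (wInt ω (cSq b) / ((1 - t) / 2) ^ η)) =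
      6 ^ η * C * wInt ω (cSq b) := by
    rw [Real.mul_rpow (by norm_num) h1t.le, Real.div_rpow h1t.le (by norm_num)]
    have hne : ((1:ℝ) - t) ^ η ≠ 0 := ne_of_gt (Real.rpow_pos_of_pos h1t η)
    have hne2 : (2:ℝ) ^ η ≠ 0 := ne_of_gt (Real.rpow_pos_of_pos (by norm_num) η)
    have h6 : (6:ℝ) ^ η = 3 ^ η * 2 ^ η := by
      rw [← Real.mul_rpow (by norm_num) (by norm_num)]; norm_num
    rw [h6]
    field_simp
  have hnn3 : (0:ℝ) ≤ (3 * (1 - t)) ^ η := Real.rpow_nonneg (by positivity) η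
  show wInt ω (cSq a) ≤ 6 ^ η * C * wInt ω (cSq b)
  calc wInt ω (cSq a) ≤ (3 * (1 - t)) ^ η * ∫ z in cSq a, g z ∂dA := h1
  _ ≤ (3 * (1 - t)) ^ η * ∫ z in uD, g z ∂dA := mul_le_mul_of_nonneg_left h2 hnn3
  _ ≤ (3 * (1 - t)) ^ η * (C * (wInt ω (cSq b) / ((1 - t) / 2) ^ η)) :=
      mul_le_mul_of_nonneg_left hPb hnn3
  _ = 6 ^ η * C * wInt ω (cSq b) := hfac


lemma dhat_to_ii (hw : IsWeight ω) (h : DhatD ω) :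
    ∃ β C : ℝ, 0 < β ∧ 1 ≤ C ∧ ∀ a a' : ℂ, a ≠ 0 →
      ‖a‖ ≤ ‖a'‖ → ‖a'‖ < 1 →
      Complex.arg a = Complex.arg a' →
      wInt ω (cSq a) / (1 - ‖a‖) ^ β ≤
        C * (wInt ω (cSq a') / (1 - ‖a'‖) ^ β) := by
  obtain ⟨β, hβ1, hA⟩ := keyA hw h
  have h2β : (1:ℝ) ≤ 2 ^ β := by
    calc (1:ℝ) = 2 ^ (0:ℝ) := (Real.rpow_zero 2).symm
    _ ≤ 2 ^ β := Real.rpow_le_rpow_of_exponent_le (by norm_num) (by linarith)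
  refine ⟨β, 2 ^ β, by linarith, h2β, fun a a' ha hle hlt harg => ?_⟩
  have ha'0 : a' ≠ 0 := by
    intro h0
    rw [h0, norm_zero] at hle
    exact ha (norm_eq_zero.mp (le_antisymm hle (norm_nonneg a)))
  have ht0 : 0 < ‖a‖ := norm_pos_iff.mpr ha
  have h1t' : 0 < 1 - ‖a'‖ := by linarith
  have h1t : 0 < 1 - ‖a‖ := by linarith
  have hrep : a' = ptd a (‖a'‖) := eq_ptd_of_arg_eq ha ha'0 harg
  have hrepa : a = ptd a (‖a‖) := (ptd_abs a ha).symm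
  have hkey := hA a ha (‖a‖) (‖a'‖) ht0 hle hlt
  rw [← hrepa, ← hrep] at hkey
  rw [div_le_iff₀ (Real.rpow_pos_of_pos h1t β)]
  calc wInt ω (cSq a)
      ≤ 2 ^ β * ((1 - ‖a‖) / (1 - ‖a'‖)) ^ β * wInt ω (cSq a') := hkey
  _ = 2 ^ β * (wInt ω (cSq a') / (1 - ‖a'‖) ^ β) * (1 - ‖a‖) ^ β := by
      rw [Real.div_rpow h1t.le h1t'.le]
      have hne : (1 - ‖a'‖) ^ β ≠ 0 := ne_of_gt (Real.rpow_pos_of_pos h1t' β)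
      field_simp

lemma ii_to_dhat (h : ∃ β C : ℝ, 0 < β ∧ 1 ≤ C ∧ ∀ a a' : ℂ, a ≠ 0 →
      ‖a‖ ≤ ‖a'‖ → ‖a'‖ < 1 →
      Complex.arg a = Complex.arg a' →
      wInt ω (cSq a) / (1 - ‖a‖) ^ β ≤
        C * (wInt ω (cSq a') / (1 - ‖a'‖) ^ β)) : DhatD ω := by
  obtain ⟨β, C, hβ, hC, hP⟩ := h
  refine ⟨C * 2 ^ β,
    mul_pos (by linarith) (Real.rpow_pos_of_pos (by norm_num) β), fun a ha ht1 => ?_⟩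
  set t := ‖a‖ with htdef
  have ht' : t < 1 := ht1
  have ht0 : 0 < t := norm_pos_iff.mpr ha
  have h1t : 0 < 1 - t := by linarith
  set b := ptd a ((1 + t) / 2) with hb
  have hbnz : b ≠ 0 := ptd_ne_zero ha (by linarith)
  have habsb : ‖b‖ = (1 + t) / 2 := abs_ptd ha (by linarith)
  have harg : Complex.arg a = Complex.arg b := (arg_ptd ha (by linarith)).symm
  have hkey := hP a b ha (by rw [habsb]; linarith) (by rw [habsb]; linarith) harg
  rw [habsb] at hkey
  have h2 : 1 - (1 + t) / 2 = (1 - t) / 2 := by ring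
  rw [h2, div_le_iff₀ (Real.rpow_pos_of_pos h1t β)] at hkey
  show wInt ω (cSq a) ≤ C * 2 ^ β * wInt ω (cSq b)
  calc wInt ω (cSq a) ≤ C * (wInt ω (cSq b) / ((1 - t) / 2) ^ β) * (1 - t) ^ β := hkey
  _ = C * 2 ^ β * wInt ω (cSq b) := by
      rw [Real.div_rpow h1t.le (by norm_num : (0:ℝ) ≤ 2)]
      have hne : ((1:ℝ) - t) ^ β ≠ 0 := ne_of_gt (Real.rpow_pos_of_pos h1t β)
      have hne2 : (2:ℝ) ^ β ≠ 0 := ne_of_gt (Real.rpow_pos_of_pos (by norm_num) β)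
      field_simp

lemma dhat_to_iii (hw : IsWeight ω) (h : DhatD ω) :
    ∀ K : ℝ, 0 < K → ∃ C : ℝ, 0 < C ∧ ∀ a : ℂ, a ≠ 0 → ‖a‖ < 1 →
      wInt ω (cSq a) ≤ C * wInt ω
        (cSq ((((K + ‖a‖) / (K + 1) : ℝ) : ℂ) * (a / (‖a‖ : ℂ)))) := by
  obtain ⟨β, hβ1, hA⟩ := keyA hw h
  intro K hK
  refine ⟨2 ^ β * (K + 1) ^ β, by positivity, fun a ha ht1 => ?_⟩
  set t := ‖a‖ with htdef
  have ht' : t < 1 := ht1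
  have ht0 : 0 < t := norm_pos_iff.mpr ha
  have h1t : 0 < 1 - t := by linarith
  have hKt : t ≤ (K + t) / (K + 1) := by
    rw [le_div_iff₀ (by linarith)]
    nlinarith
  have hKt1 : (K + t) / (K + 1) < 1 := by
    rw [div_lt_one (by linarith)]
    linarith
  have hkey := hA a ha t ((K + t) / (K + 1)) ht0 hKt hKt1
  rw [show ptd a t = a from ptd_abs a ha] at hkey
  have hratio : (1 - t) / (1 - (K + t) / (K + 1)) = K + 1 := by
    have h5 : 1 - (K + t) / (K + 1) = (1 - t) / (K + 1) := by
      field_simp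
      ring
    rw [h5, div_div_eq_mul_div, mul_comm, mul_div_assoc, div_self h1t.ne', mul_one]
  rw [hratio] at hkey
  show wInt ω (cSq a) ≤ 2 ^ β * (K + 1) ^ β * wInt ω (cSq (ptd a ((K + t) / (K + 1))))
  exact hkey

lemma iii_to_dhat (h : ∀ K : ℝ, 0 < K → ∃ C : ℝ, 0 < C ∧ ∀ a : ℂ, a ≠ 0 →
      ‖a‖ < 1 → wInt ω (cSq a) ≤ C * wInt ω
        (cSq ((((K + ‖a‖) / (K + 1) : ℝ) : ℂ) * (a / (‖a‖ : ℂ))))) :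
    DhatD ω := by
  obtain ⟨C, hC, hP⟩ := h 1 one_pos
  refine ⟨C, hC, fun a ha ht1 => ?_⟩
  have hp := hP a ha ht1
  have he : ((1 + ‖a‖) / (1 + 1) : ℝ) = (1 + ‖a‖) / 2 := by norm_num
  rwa [he] at hp

end DhatAux

/-- characterizations of the class `D̂(𝔻)`. -/
theorem DhatD_characterizations (ω : ℂ → ℝ) (hw : IsWeight ω)
    (hpos : ∀ a : ℂ, a ≠ 0 → ‖a‖ < 1 → 0 < wInt ω (cSq a)) :
    (DhatD ω ↔ ∃ β C : ℝ, 0 < β ∧ 1 ≤ C ∧ ∀ a a' : ℂ, a ≠ 0 →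
        ‖a‖ ≤ ‖a'‖ → ‖a'‖ < 1 →
        Complex.arg a = Complex.arg a' →
        wInt ω (cSq a) / (1 - ‖a‖) ^ β ≤
          C * (wInt ω (cSq a') / (1 - ‖a'‖) ^ β)) ∧
    (DhatD ω ↔ ∀ K : ℝ, 0 < K → ∃ C : ℝ, 0 < C ∧ ∀ a : ℂ, a ≠ 0 → ‖a‖ < 1 →
        wInt ω (cSq a) ≤ C * wInt ω
          (cSq ((((K + ‖a‖) / (K + 1) : ℝ) : ℂ) * (a / (‖a‖ : ℂ))))) ∧
    (DhatD ω ↔ ∃ η C : ℝ, 0 < η ∧ 0 < C ∧ ∀ a : ℂ, a ≠ 0 → ‖a‖ < 1 →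
        (∫ z in uD, ω z / ‖1 - (starRingEnd ℂ) a * z‖ ^ η ∂dA) ≤
          C * (wInt ω (cSq a) / (1 - ‖a‖) ^ η)) :=
  ⟨⟨fun h => DhatAux.dhat_to_ii hw h, fun h => DhatAux.ii_to_dhat h⟩,
   ⟨fun h => DhatAux.dhat_to_iii hw h, fun h => DhatAux.iii_to_dhat h⟩,
   ⟨fun h => DhatAux.main_iv hw hpos h, fun h => DhatAux.iv_to_dhat hw h⟩⟩

end
end
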